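/- arXiv:1110.4539 — 5 statements merged into one kernel-verified Lean document; each statement's English description precedes it below -/
import Mathlib

section
/- Two bidirected graphs are Markov equivalent if and only if they are equal. -/
/-- A loopless mixed graph with three kinds of edges: lines (undirected),
arrows (directed, `arrow i j` means `i → j`), and arcs (bidirected). -/
structure MixedGraph (V : Type*) where
  line : V → V → Prop
  arrow : V → V → Prop
  arc : V → V → Prop
  line_symm : ∀ i j, line i j → line j i
  arc_symm : ∀ i j, arc i j → arc j i
  line_irrefl : ∀ i, ¬ line i i
  arrow_irrefl : ∀ i, ¬ arrow i i
  arc_irrefl : ∀ i, ¬ arc i i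

namespace MixedGraph

variable {V : Type*}

/-- `i` and `j` are adjacent (joined by some edge). -/
def adj (G : MixedGraph V) (i j : V) : Prop :=
  G.line i j ∨ G.arrow i j ∨ G.arrow j i ∨ G.arc i j

/-- There is an edge between `i` and `j` with an arrowhead pointing at `j`. -/
def headAt (G : MixedGraph V) (i j : V) : Prop :=
  G.arrow i j ∨ G.arc i j

/-- `j` is a collider on the V-configuration `⟨i, j, k⟩`. -/
def collider (G : MixedGraph V) (i j k : V) : Prop :=
  G.headAt i j ∧ G.headAt k j

/-- `i` is an ancestor of `j` (a direction-preserving path of arrows from `i` to `j`). -/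
def anc (G : MixedGraph V) (i j : V) : Prop :=
  Relation.ReflTransGen G.arrow i j

/-- A path: a list of pairwise distinct nodes, consecutive ones adjacent. -/
def isPath (G : MixedGraph V) (p : List V) : Prop :=
  p.Nodup ∧ List.Chain' G.adj p

/-- Inner-node condition for an `m`-connecting path given `C`:
every collider inner node is in `C` or an ancestor of a node of `C`,
every non-collider inner node is outside `C`. -/
def innerOK (G : MixedGraph V) (C : Set V) : List V → Prop
  | a :: b :: c :: rest =>
      ((G.collider a b c → b ∈ C ∨ ∃ x ∈ C, G.anc b x) ∧
        (¬ G.collider a b c → b ∉ C)) ∧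
      innerOK G C (b :: c :: rest)
  | _ => True

/-- `p` is an `m`-connecting path between `i` and `j` given `C`. -/
def mConnecting (G : MixedGraph V) (C : Set V) (i j : V) (p : List V) : Prop :=
  G.isPath p ∧ 2 ≤ p.length ∧ p.head? = some i ∧ p.getLast? = some j ∧
    G.innerOK C p

/-- `A` is `m`-separated from `B` given `C`. -/
def mSep (G : MixedGraph V) (A B C : Set V) : Prop :=
  ¬ ∃ (i j : V) (p : List V), i ∈ A ∧ j ∈ B ∧ G.mConnecting C i j p

/-- Two mixed graphs on the same node set are Markov equivalent if they induce
exactly the same `m`-separation statements among disjoint sets. -/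
def markovEquiv (G₁ G₂ : MixedGraph V) : Prop :=
  ∀ A B C : Set V, Disjoint A B → Disjoint A C → Disjoint B C →
    (G₁.mSep A B C ↔ G₂.mSep A B C)

/-- An undirected graph: only line edges. -/
def isUG (G : MixedGraph V) : Prop :=
  (∀ i j, ¬ G.arrow i j) ∧ (∀ i j, ¬ G.arc i j)

/-- A bidirected graph: only arc edges. -/
def isBG (G : MixedGraph V) : Prop :=
  (∀ i j, ¬ G.arrow i j) ∧ (∀ i j, ¬ G.line i j)

/-- A directed acyclic graph: only arrows, and no directed cycle. -/
def isDAG (G : MixedGraph V) : Prop :=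
  (∀ i j, ¬ G.line i j) ∧ (∀ i j, ¬ G.arc i j) ∧ ∀ i, ¬ Relation.TransGen G.arrow i i

/-- An ancestral graph: no node is an ancestor of one of its parents or spouses,
and no arrowhead points at a node having a neighbour. -/
def isAncestral (G : MixedGraph V) : Prop :=
  (∀ i j, (G.arrow j i ∨ G.arc j i) → ¬ G.anc i j) ∧
  (∀ i j k, G.line i j → ¬ G.headAt k i)

/-- Maximality: every pair of distinct non-adjacent nodes can be `m`-separated. -/
def isMaximal (G : MixedGraph V) : Prop :=
  ∀ i j, i ≠ j → ¬ G.adj i j → ∃ C : Set V, i ∉ C ∧ j ∉ C ∧ G.mSep {i} {j} C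

/-- A maximal ancestral graph. -/
def isMAG (G : MixedGraph V) : Prop :=
  G.isAncestral ∧ G.isMaximal

/-- Two graphs have the same skeleton. -/
def sameSkeleton (G₁ G₂ : MixedGraph V) : Prop :=
  ∀ i j, G₁.adj i j ↔ G₂.adj i j

/-- An unshielded collider V-configuration `⟨i, j, k⟩`. -/
def unshieldedCollider (G : MixedGraph V) (i j k : V) : Prop :=
  G.collider i j k ∧ i ≠ k ∧ ¬ G.adj i k

end MixedGraph

lemma bg_adj_iff_arc {V : Type*} {G : MixedGraph V} (h : G.isBG) (i j : V) :
    G.adj i j ↔ G.arc i j := by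
  unfold MixedGraph.adj
  have h1 := h.1
  have h2 := h.2
  constructor
  · rintro (hl | ha | ha | hc)
    · exact absurd hl (h2 i j)
    · exact absurd ha (h1 i j)
    · exact absurd ha (h1 j i)
    · exact hc
  · intro hc; exact Or.inr (Or.inr (Or.inr hc))

lemma bg_mSep_empty_iff {V : Type*} {G : MixedGraph V} (h : G.isBG) {i j : V}
    (hij : i ≠ j) : G.mSep {i} {j} ∅ ↔ ¬ G.adj i j := by
  constructor
  · intro hsep hadj
    apply hsep
    refine ⟨i, j, [i, j], rfl, rfl, ⟨⟨?_, ?_⟩, ?_, rfl, ?_, trivial⟩⟩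
    · simp [hij]
    · exact List.isChain_pair.mpr hadj
    · simp
    · simp
  · intro hadj hcon
    obtain ⟨a, b, p, ha, hb, hpath, hlen, hhead, hlast, hinner⟩ := hcon
    simp only [Set.mem_singleton_iff] at ha hb
    subst ha; subst hb
    match p, hhead with
    | (x :: y :: rest), hhead =>
      simp only [List.head?_cons, Option.some.injEq] at hhead
      subst hhead
      match rest, hlast, hinner with
      | [], hlast, _ =>
        simp only [List.getLast?_cons_cons, List.getLast?_singleton,
          Option.some.injEq] at hlast
        subst hlast
        exact hadj (List.isChain_pair.mp hpath.2)
      | (c :: rest'), hlast, hinner =>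
        -- y is an inner collider; with C = ∅ this is impossible
        have hxy : G.adj x y := (List.isChain_cons_cons.mp hpath.2).1
        have hyc : G.adj y c := (List.isChain_cons_cons.mp (List.isChain_cons_cons.mp hpath.2).2).1
        have harcxy := (bg_adj_iff_arc h x y).mp hxy
        have harcyc := (bg_adj_iff_arc h y c).mp hyc
        have hcoll : G.collider x y c :=
          ⟨Or.inr harcxy, Or.inr (G.arc_symm y c harcyc)⟩
        rcases hinner.1.1 hcoll with hy | ⟨z, hz, _⟩
        · exact hy
        · exact hz

/-- Two bidirected graphs are Markov equivalent if and only if they are equal. -/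
theorem bg_markovEquiv_iff_eq {V : Type*} [Fintype V] (G₁ G₂ : MixedGraph V)
    (h₁ : G₁.isBG) (h₂ : G₂.isBG) :
    G₁.markovEquiv G₂ ↔ G₁ = G₂ := by
  constructor
  · intro h
    have harc : ∀ i j, G₁.arc i j ↔ G₂.arc i j := by
      intro i j
      by_cases hij : i = j
      · subst hij
        constructor
        · intro hc; exact absurd hc (G₁.arc_irrefl i)
        · intro hc; exact absurd hc (G₂.arc_irrefl i)
      · have hd : Disjoint ({i} : Set V) {j} := Set.disjoint_singleton.mpr hij
        have := h {i} {j} ∅ hd (Set.disjoint_empty _) (Set.disjoint_empty _)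
        rw [bg_mSep_empty_iff h₁ hij, bg_mSep_empty_iff h₂ hij] at this
        have hadj : G₁.adj i j ↔ G₂.adj i j := not_iff_not.mp this
        rw [bg_adj_iff_arc h₁, bg_adj_iff_arc h₂] at hadj
        exact hadj
    cases G₁ with
    | mk l₁ a₁ c₁ ls₁ cs₁ li₁ ai₁ ci₁ =>
      cases G₂ with
      | mk l₂ a₂ c₂ ls₂ cs₂ li₂ ai₂ ci₂ =>
        simp only [MixedGraph.mk.injEq]
        refine ⟨?_, ?_, ?_⟩
        · funext i j
          exact propext (iff_of_false (h₁.2 i j) (h₂.2 i j))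
        · funext i j
          exact propext (iff_of_false (h₁.1 i j) (h₂.1 i j))
        · funext i j
          exact propext (harc i j)
  · rintro rfl
    intro A B C _ _ _
    rfl
end

section
/- Two directed acyclic graphs are Markov equivalent if and only if they have the same skeleton and the same unshielded colliders (i.e., the same triples (i, j, k) with i → j ← k and i not adjacent to k). -/
namespace MixedGraph
variable {V : Type*}

/-- An unshielded collision V-configuration `i → j ← k` with `i, k` non-adjacent. -/
def unshieldedCollision (G : MixedGraph V) (i j k : V) : Prop :=
  G.arrow i j ∧ G.arrow k j ∧ i ≠ k ∧ ¬ G.adj i k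

end MixedGraph

namespace MEquiv
open MixedGraph Relation List
variable {V : Type*} {G G₁ G₂ : MixedGraph V} {C : Set V}

/-! ### basic DAG facts -/

lemma arrow_ne (hG : G.isDAG) {i j : V} (h : G.arrow i j) : i ≠ j := by
  rintro rfl; exact G.arrow_irrefl i h

lemma arrow_asymm (hG : G.isDAG) {i j : V} (h : G.arrow i j) : ¬ G.arrow j i := by
  intro h'
  exact hG.2.2 i (Relation.TransGen.head h (Relation.TransGen.single h'))

lemma anc_asymm (hG : G.isDAG) {i j : V} (h : G.arrow i j) : ¬ G.anc j i := by
  intro h'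
  exact hG.2.2 j (Relation.TransGen.tail' h' h)

lemma dag_headAt (hG : G.isDAG) {i j : V} : G.headAt i j ↔ G.arrow i j := by
  unfold MixedGraph.headAt
  simp [hG.2.1 i j]

lemma dag_adj (hG : G.isDAG) {i j : V} : G.adj i j ↔ G.arrow i j ∨ G.arrow j i := by
  unfold MixedGraph.adj
  simp [hG.1 i j, hG.2.1 i j]

lemma dag_collider (hG : G.isDAG) {a b c : V} :
    G.collider a b c ↔ G.arrow a b ∧ G.arrow c b := by
  unfold MixedGraph.collider; rw [dag_headAt hG, dag_headAt hG]

lemma adj_irrefl (hG : G.isDAG) {i : V} : ¬ G.adj i i := by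
  rw [dag_adj hG]; rintro (h | h) <;> exact G.arrow_irrefl i h

lemma adj_symm {i j : V} (h : G.adj i j) : G.adj j i := by
  rcases h with h | h | h | h
  · exact Or.inl (G.line_symm _ _ h)
  · exact Or.inr (Or.inr (Or.inl h))
  · exact Or.inr (Or.inl h)
  · exact Or.inr (Or.inr (Or.inr (G.arc_symm _ _ h)))

lemma arrow_of_adj (hG : G.isDAG) {i j : V} (h : G.adj i j) (h' : ¬ G.arrow j i) :
    G.arrow i j := ((dag_adj hG).1 h).resolve_right h'

/-! ### structural lemmas for innerOK -/

def ok3 (G : MixedGraph V) (C : Set V) (a b c : V) : Prop :=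
  (G.collider a b c → b ∈ C ∨ ∃ x ∈ C, G.anc b x) ∧
  (¬ G.collider a b c → b ∉ C)

lemma innerOK_cons3 {a b c : V} {r : List V} :
    G.innerOK C (a::b::c::r) ↔ (ok3 G C a b c ∧ G.innerOK C (b::c::r)) := Iff.rfl

lemma innerOK_nil : G.innerOK C [] := trivial
lemma innerOK_one {a : V} : G.innerOK C [a] := trivial
lemma innerOK_two {a b : V} : G.innerOK C [a, b] := trivial

/-- characterization of innerOK by all consecutive triples -/
lemma innerOK_iff (p : List V) :
    G.innerOK C p ↔ ∀ u a b c v, p = u ++ a::b::c::v → ok3 G C a b c := by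
  induction p with
  | nil =>
    simp only [innerOK_nil, true_iff]
    intro u a b c v h
    exact absurd h (by simp)
  | cons x xs ih =>
    constructor
    · intro hp u a b c v h
      match u, h with
      | [], h =>
        obtain ⟨rfl, rfl⟩ : x = a ∧ xs = b::c::v := by
          constructor <;> [exact (List.cons.injEq .. ▸ h).1; exact (List.cons.injEq .. ▸ h).2]
        exact hp.1
      | u'::u'', h =>
        obtain ⟨rfl, h2⟩ : x = u' ∧ xs = u'' ++ a::b::c::v := by
          constructor <;> [exact (List.cons.injEq .. ▸ h).1; exact (List.cons.injEq .. ▸ h).2]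
        have hxs : G.innerOK C xs := by
          match xs, hp with
          | [], _ => exact innerOK_nil
          | [y], _ => exact innerOK_one
          | y::z::w, hp => exact hp.2
        exact (ih.1 hxs) u'' a b c v h2
    · intro h
      match xs with
      | [] => exact innerOK_one
      | [y] => exact innerOK_two
      | y::z::w =>
        refine ⟨h [] x y z w rfl, ih.2 ?_⟩
        intro u a b c v hv
        exact h (x::u) a b c v (by rw [hv]; rfl)
lemma innerOK_infix {p l : List V} (hp : G.innerOK C p) {xs ys : List V}
    (h : p = xs ++ l ++ ys) : G.innerOK C l := by
  rw [innerOK_iff] at hp ⊢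
  intro u a b c v hl
  exact hp (xs ++ u) a b c (v ++ ys) (by rw [h, hl]; simp)

lemma ok3_symm {a b c : V} (h : ok3 G C a b c) : ok3 G C c b a := by
  unfold ok3 MixedGraph.collider at *
  tauto

lemma innerOK_reverse {p : List V} (hp : G.innerOK C p) : G.innerOK C p.reverse := by
  rw [innerOK_iff] at hp ⊢
  intro u a b c v h
  have : p = v.reverse ++ c::b::a::u.reverse := by
    have := congrArg List.reverse h
    simpa using this
  exact ok3_symm (hp _ c b a _ this)

lemma not_innerOK_decomp {p : List V} (hp : ¬ G.innerOK C p) :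
    ∃ u a b c v, p = u ++ a::b::c::v ∧ ¬ ok3 G C a b c := by
  by_contra h
  push_neg at h
  exact hp ((innerOK_iff p).2 fun u a b c v hv => h u a b c v hv)

lemma not_nodup_decomp {p : List V} (hp : ¬ p.Nodup) :
    ∃ (e : List V) (x : V) (m f : List V), p = e ++ x :: (m ++ x :: f) := by
  induction p with
  | nil => exact absurd List.nodup_nil hp
  | cons h t ih =>
    by_cases hmem : h ∈ t
    · obtain ⟨m, f, rfl⟩ := List.append_of_mem hmem
      exact ⟨[], h, m, f, rfl⟩
    · have : ¬ t.Nodup := fun hn => hp (List.nodup_cons.2 ⟨hmem, hn⟩)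
      obtain ⟨e, x, m, f, rfl⟩ := ih this
      exact ⟨h::e, x, m, f, rfl⟩

/-- gluing innerOK at an overlapping pair -/
lemma innerOK_glue : ∀ (xs : List V) (a b : V) (ys : List V),
    G.innerOK C (xs ++ a::b::ys) ↔ G.innerOK C (xs ++ [a,b]) ∧ G.innerOK C (a::b::ys)
  | [], a, b, ys => by simp [innerOK_two]
  | [x], a, b, ys => by
    cases ys with
    | nil => simpa using fun h => innerOK_two
    | cons y ys =>
      show (ok3 G C x a b ∧ _) ↔ (ok3 G C x a b ∧ _) ∧ _
      constructor
      · rintro ⟨h1, h2⟩; exact ⟨⟨h1, innerOK_two⟩, h2⟩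
      · rintro ⟨⟨h1, _⟩, h2⟩; exact ⟨h1, h2⟩
  | x::x'::xs, a, b, ys => by
    have H := innerOK_glue (x'::xs) a b ys
    cases xs with
    | nil =>
      show (ok3 G C x x' a ∧ _) ↔ (ok3 G C x x' a ∧ _) ∧ _
      simp only [List.singleton_append, List.cons_append, List.nil_append] at H ⊢
      constructor
      · rintro ⟨h1, h2⟩
        rcases H.1 h2 with ⟨h3, h4⟩
        exact ⟨⟨h1, h3⟩, h4⟩
      · rintro ⟨⟨h1, h3⟩, h4⟩
        exact ⟨h1, H.2 ⟨h3, h4⟩⟩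
    | cons x'' xs =>
      show (ok3 G C x x' x'' ∧ _) ↔ (ok3 G C x x' x'' ∧ _) ∧ _
      constructor
      · rintro ⟨h1, h2⟩
        rcases H.1 h2 with ⟨h3, h4⟩
        exact ⟨⟨h1, h3⟩, h4⟩
      · rintro ⟨⟨h1, h3⟩, h4⟩
        exact ⟨h1, H.2 ⟨h3, h4⟩⟩

/-- innerOK with two appended elements, in terms of the last condition -/
lemma innerOK_snoc2 : ∀ (u : List V) (a x : V),
    G.innerOK C (u ++ [a, x]) ↔
      G.innerOK C (u ++ [a]) ∧ (∀ w, u.getLast? = some w → ok3 G C w a x)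
  | [], a, x => by simp [innerOK_two, innerOK_one]
  | [w], a, x => by
    constructor
    · rintro ⟨h1, _⟩
      refine ⟨innerOK_two, fun w' hw' => ?_⟩
      have hww : w = w' := by simpa using hw'
      exact hww ▸ h1
    · rintro ⟨_, h⟩
      exact ⟨h w (by simp), innerOK_two⟩
  | w::w'::u, a, x => by
    have H := innerOK_snoc2 (w'::u) a x
    have hLast : ∀ z : V, (w::w'::u).getLast? = some z ↔ (w'::u).getLast? = some z := by
      intro z; rw [List.getLast?_cons_cons]
    cases u with
    | nil =>
      show (ok3 G C w w' a ∧ _) ↔ (ok3 G C w w' a ∧ _) ∧ _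
      simp only [List.singleton_append, List.cons_append, List.nil_append] at H ⊢
      constructor
      · rintro ⟨h1, h2⟩
        rcases H.1 h2 with ⟨h3, h4⟩
        exact ⟨⟨h1, h3⟩, fun z hz => h4 z ((hLast z).1 hz)⟩
      · rintro ⟨⟨h1, h3⟩, h4⟩
        exact ⟨h1, H.2 ⟨h3, fun z hz => h4 z ((hLast z).2 hz)⟩⟩
    | cons w'' u =>
      show (ok3 G C w w' w'' ∧ _) ↔ (ok3 G C w w' w'' ∧ _) ∧ _
      simp only [List.cons_append] at H ⊢
      constructor
      · rintro ⟨h1, h2⟩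
        rcases H.1 h2 with ⟨h3, h4⟩
        exact ⟨⟨h1, h3⟩, fun z hz => h4 z ((hLast z).1 hz)⟩
      · rintro ⟨⟨h1, h3⟩, h4⟩
        exact ⟨h1, H.2 ⟨h3, fun z hz => h4 z ((hLast z).2 hz)⟩⟩
lemma getLast?_append_cons : ∀ (l1 : List V) (x : V) (l2 : List V),
    (l1 ++ x :: l2).getLast? = (x::l2).getLast?
  | [], x, l2 => rfl
  | [a], x, l2 => by rw [List.singleton_append, List.getLast?_cons_cons]
  | a::b::l, x, l2 => by
    rw [List.cons_append, List.cons_append, List.getLast?_cons_cons,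
      ← List.cons_append]
    exact getLast?_append_cons (b::l) x l2

lemma head?_append_left (l1 l2 : List V) (h : l1 ≠ []) : (l1 ++ l2).head? = l1.head? := by
  cases l1 with
  | nil => exact absurd rfl h
  | cons a l => rfl

lemma infix_mid (l1 l2 l3 : List V) : l2 <:+: l1 ++ l2 ++ l3 :=
  ⟨l1, l3, by simp⟩

lemma length_ge_two {p : List V} {i j : V} (h1 : p.head? = some i)
    (h2 : p.getLast? = some j) (hij : i ≠ j) : 2 ≤ p.length := by
  match p with
  | [] => simp at h1
  | [a] =>
    simp at h1 h2
    exact absurd (h1.symm.trans h2) hij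
  | a::b::t => simp

/-- from a chain of arrows, the head is an ancestor of the last element -/
lemma chain_anc : ∀ (l : List V) (a y : V), List.Chain' G.arrow (a::l) →
    (a::l).getLast? = some y → G.anc a y
  | [], a, y, _, h => by
    simp at h
    exact h ▸ Relation.ReflTransGen.refl
  | b::l, a, y, hc, h => by
    have h1 : G.arrow a b := List.isChain_cons_cons.1 hc |>.1
    have h2 := chain_anc l b y (List.isChain_cons_cons.1 hc).2
      (by rwa [List.getLast?_cons_cons] at h)
    exact Relation.ReflTransGen.head h1 h2

/-- follow a directed edge along a walk: either we reach a collider (hence an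
ancestor of C) or the whole remaining walk is directed. -/
lemma follow (hG : G.isDAG) : ∀ (l : List V) (a b : V),
    List.Chain' G.adj (a::b::l) → G.innerOK C (a::b::l) → G.arrow a b →
    (∃ x ∈ C, G.anc a x) ∨ List.Chain' G.arrow (a::b::l)
  | [], a, b, _, _, hab => Or.inr (List.isChain_cons_cons.2 ⟨hab, List.isChain_singleton b⟩)
  | c::l, a, b, hc, hok, hab => by
    rcases hok with ⟨⟨hcol, hncol⟩, hok2⟩
    by_cases hbc : G.collider a b c
    · left
      rcases hcol hbc with hbC | ⟨x, hx, hanc⟩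
      · exact ⟨b, hbC, Relation.ReflTransGen.single hab⟩
      · exact ⟨x, hx, Relation.ReflTransGen.head hab hanc⟩
    · have hnc : ¬ G.headAt c b := fun h => hbc ⟨(dag_headAt hG).2 hab, h⟩
      have harr : G.arrow b c := by
        refine arrow_of_adj hG (List.isChain_cons_cons.1 (List.isChain_cons_cons.1 hc).2).1 ?_
        intro h; exact hnc ((dag_headAt hG).2 h)
      rcases follow hG l b c (List.isChain_cons_cons.1 hc).2 hok2 harr with ⟨x, hx, hanc⟩ | hch
      · exact Or.inl ⟨x, hx, Relation.ReflTransGen.head hab hanc⟩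
      · exact Or.inr (List.isChain_cons_cons.2 ⟨hab, hch⟩)

lemma getLast?_reverse' (l : List V) : l.reverse.getLast? = l.head? := by
  induction l with
  | nil => rfl
  | cons a t ih => rw [List.reverse_cons, getLast?_append_cons]; rfl

lemma mem_of_getLast?' {l : List V} {j : V} (h : l.getLast? = some j) : j ∈ l := by
  obtain ⟨hne, heq⟩ := List.mem_getLast?_eq_getLast (Option.mem_def.2 h)
  exact heq ▸ List.getLast_mem hne
lemma nodup_of_decomp {p u l : List V} (hn : p.Nodup) (hp : p = u ++ l) : l.Nodup :=
  (hp ▸ hn).sublist (List.sublist_append_right u l)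

lemma middle_ne_ends {p u : List V} {a b c i j : V} {v : List V} (hn : p.Nodup)
    (hp : p = u ++ a::b::c::v) (hi : p.head? = some i) (hj : p.getLast? = some j) :
    b ≠ i ∧ b ≠ j := by
  subst hp
  constructor
  · cases u with
    | nil =>
      simp only [List.nil_append, List.head?_cons, Option.some.injEq] at hi
      subst hi
      intro h
      exact (List.nodup_cons.1 hn).1 (h ▸ List.mem_cons_self)
    | cons x u' =>
      simp only [List.cons_append, List.head?_cons, Option.some.injEq] at hi
      subst hi
      intro h
      subst h
      exact (List.nodup_cons.1 hn).1 (by simp)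
  · have h1 : (u ++ a::b::c::v).getLast? = (c::v).getLast? := by
      rw [show u ++ a::b::c::v = (u++[a,b]) ++ c::v by simp]
      exact getLast?_append_cons _ _ _
    have hjm : j ∈ c::v := by
      rw [h1] at hj
      exact mem_of_getLast?' hj
    have hnd : (b::c::v).Nodup := nodup_of_decomp hn (by simp : u ++ a::b::c::v = (u++[a]) ++ b::c::v)
    intro h
    exact (List.nodup_cons.1 hnd).1 (h ▸ hjm)

/-- Key separation lemma: in a DAG, non-adjacent distinct nodes are m-separated
by the set of their proper ancestors. -/
lemma sep_anc (hG : G.isDAG) {i j : V} (hij : i ≠ j) (hna : ¬ G.adj i j) :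
    G.mSep {i} {j} {v | (G.anc v i ∨ G.anc v j) ∧ v ≠ i ∧ v ≠ j} := by
  set C₀ : Set V := {v | (G.anc v i ∨ G.anc v j) ∧ v ≠ i ∧ v ≠ j} with hC₀
  rintro ⟨i', j', p, hi', hj', hp⟩
  rw [Set.mem_singleton_iff] at hi' hj'
  rw [hi', hj'] at hp
  obtain ⟨⟨hnd, hch⟩, hlen, hhead, hlast, hok⟩ := hp
  -- every inner triple is a collider
  have claimA : ∀ u a b c v, p = u ++ a::b::c::v →
      G.collider a b c ∧ (G.anc b i ∨ G.anc b j) := by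
    intro u a b c v hdec
    have hok3 := (innerOK_iff p).1 hok u a b c v hdec
    have hne := middle_ne_ends hnd hdec hhead hlast
    have hbC : b ∈ C₀ → (G.anc b i ∨ G.anc b j) := fun h => h.1
    have anc_to : (∃ x ∈ C₀, G.anc b x) → (G.anc b i ∨ G.anc b j) := by
      rintro ⟨x, hx, hanc⟩
      rcases hx.1 with h | h
      · exact Or.inl (hanc.trans h)
      · exact Or.inr (hanc.trans h)
    by_cases hcol : G.collider a b c
    · refine ⟨hcol, ?_⟩
      rcases hok3.1 hcol with h | h
      · exact hbC h
      · exact anc_to h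
    -- non-collider: b is an ancestor of an endpoint or of C₀, contradiction
    · exfalso
      have hbnotC : b ∉ C₀ := hok3.2 hcol
      have hanc : G.anc b i ∨ G.anc b j := by
        rcases Classical.em (G.headAt c b) with hcb | hcb
        · -- then ¬ headAt a b, so arrow b a; follow backwards
          have hab : ¬ G.headAt a b := fun h => hcol ⟨h, hcb⟩
          have hba : G.arrow b a := by
            have hadj : G.adj a b := by
              have : List.Chain' G.adj (a::b::c::v) :=
                hch.infix ⟨u, [], by simp [hdec]⟩
              exact (List.isChain_cons_cons.1 this).1
            exact arrow_of_adj hG (adj_symm hadj) fun h => hab ((dag_headAt hG).2 h)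
          have hpre : List.Chain' G.adj (u++[a,b]) :=
            hch.infix ⟨[], c::v, by simp [hdec]⟩
          have hchq : List.Chain' G.adj (b::a::u.reverse) := by
            have : List.Chain' (flip G.adj) (u++[a,b]) := hpre.imp fun _ _ h => adj_symm h
            have h2 : List.IsChain G.adj (u++[a,b]).reverse := List.isChain_reverse.2 this
            exact (by simpa using h2 : List.IsChain G.adj (b::a::u.reverse))
          have hokq : G.innerOK C₀ (b::a::u.reverse) := by
            have h1 : G.innerOK C₀ (u++[a,b]) :=
              innerOK_infix hok (by simp [hdec] : p = [] ++ (u++[a,b]) ++ c::v)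
            have h2 := innerOK_reverse h1
            simpa using h2
          rcases follow hG u.reverse b a hchq hokq hba with ⟨x, hx, hanc⟩ | hdir
          · exact anc_to ⟨x, hx, hanc⟩
          · left
            have hlq : (b::a::u.reverse).getLast? = some i := by
              have he : (b::a::u.reverse) = (u++[a,b]).reverse := by simp
              rw [he, getLast?_reverse']
              rw [hdec, show u ++ a::b::c::v = (u++[a,b]) ++ c::v by simp,
                head?_append_left _ _ (by simp)] at hhead
              exact hhead
            exact chain_anc _ b i hdir hlq
        · -- arrow b c; follow forwards
          have hbc : G.arrow b c := by
            have hadj : G.adj b c := by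
              have : List.Chain' G.adj (a::b::c::v) :=
                hch.infix ⟨u, [], by simp [hdec]⟩
              exact (List.isChain_cons_cons.1 (List.isChain_cons_cons.1 this).2).1
            exact arrow_of_adj hG hadj fun h => hcb ((dag_headAt hG).2 h)
          have hchq : List.Chain' G.adj (b::c::v) :=
            hch.infix ⟨u++[a], [], by simp [hdec]⟩
          have hokq : G.innerOK C₀ (b::c::v) :=
            innerOK_infix hok (by simp [hdec] : p = (u++[a]) ++ (b::c::v) ++ [])
          rcases follow hG v b c hchq hokq hbc with ⟨x, hx, hanc⟩ | hdir
          · exact anc_to ⟨x, hx, hanc⟩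
          · right
            have hlq : (b::c::v).getLast? = some j := by
              rw [hdec, show u ++ a::b::c::v = (u++[a]) ++ b::c::v by simp,
                getLast?_append_cons] at hlast
              exact hlast
            exact chain_anc _ b j hdir hlq
      exact hbnotC ⟨hanc, hne.1, hne.2⟩
  -- now derive the contradiction
  match p, hlen with
  | x::y::t, _ =>
    have hx : x = i := by simpa using hhead
    match t with
    | [] =>
      have hy : y = j := by simpa using hlast
      exact hna (hx ▸ hy ▸ (List.isChain_cons_cons.1 hch).1)
    | [z] =>
      have hz : z = j := by simpa using hlast
      obtain ⟨hcol, hanc⟩ := claimA [] x y z [] rfl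
      have h1 : G.arrow i y := hx ▸ (dag_headAt hG).1 hcol.1
      have h2 : G.arrow j y := hz ▸ (dag_headAt hG).1 hcol.2
      rcases hanc with h | h
      · exact hG.2.2 y (Relation.TransGen.tail' h h1)
      · exact hG.2.2 y (Relation.TransGen.tail' h h2)
    | z::w::t' =>
      obtain ⟨hcol1, _⟩ := claimA [] x y z (w::t') rfl
      obtain ⟨hcol2, _⟩ := claimA [x] y z w t' rfl
      have h1 : G.arrow z y := (dag_headAt hG).1 hcol1.2
      have h2 : G.arrow y z := (dag_headAt hG).1 hcol2.1
      exact arrow_asymm hG h1 h2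
/-! ### forward direction -/

lemma markovEquiv_symm (h : G₁.markovEquiv G₂) : G₂.markovEquiv G₁ :=
  fun A B C d1 d2 d3 => (h A B C d1 d2 d3).symm

lemma adj_of_me (h1 : G₁.isDAG) (h2 : G₂.isDAG) (hme : G₁.markovEquiv G₂)
    {i j : V} (ha : G₁.adj i j) : G₂.adj i j := by
  by_contra hn2
  have hij : i ≠ j := by rintro rfl; exact adj_irrefl h1 ha
  set C₀ : Set V := {v | (G₂.anc v i ∨ G₂.anc v j) ∧ v ≠ i ∧ v ≠ j} with hC₀
  have sep2 : G₂.mSep {i} {j} C₀ := sep_anc h2 hij hn2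
  have d1 : Disjoint ({i} : Set V) {j} := by
    rw [Set.disjoint_singleton_left]; simpa using hij
  have d2 : Disjoint ({i} : Set V) C₀ := by
    rw [Set.disjoint_singleton_left]; intro h; exact h.2.1 rfl
  have d3 : Disjoint ({j} : Set V) C₀ := by
    rw [Set.disjoint_singleton_left]; intro h; exact h.2.2 rfl
  have sep1 : G₁.mSep {i} {j} C₀ := (hme {i} {j} C₀ d1 d2 d3).2 sep2
  refine sep1 ⟨i, j, [i, j], rfl, rfl, ⟨⟨?_, ?_⟩, ?_, rfl, rfl, trivial⟩⟩
  · simp [hij]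
  · exact List.isChain_cons_cons.2 ⟨ha, List.isChain_singleton _⟩
  · simp

lemma uc_of_me (h1 : G₁.isDAG) (h2 : G₂.isDAG) (hme : G₁.markovEquiv G₂)
    (hsk : G₁.sameSkeleton G₂) {i j k : V} (hc : G₁.unshieldedCollision i j k) :
    G₂.unshieldedCollision i j k := by
  obtain ⟨hij, hkj, hik, hna⟩ := hc
  by_contra hn2
  have hadj_ij : G₂.adj i j := (hsk i j).1 (Or.inr (Or.inl hij))
  have hadj_kj : G₂.adj k j := (hsk k j).1 (Or.inr (Or.inl hkj))
  have hna2 : ¬ G₂.adj i k := fun h => hna ((hsk i k).2 h)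
  have hij' : i ≠ j := arrow_ne h1 hij
  have hkj' : k ≠ j := arrow_ne h1 hkj
  have hjik : G₂.arrow j i ∨ G₂.arrow j k := by
    by_contra hcon
    push_neg at hcon
    exact hn2 ⟨arrow_of_adj h2 hadj_ij hcon.1, arrow_of_adj h2 hadj_kj hcon.2, hik, hna2⟩
  set C₀ : Set V := {v | (G₂.anc v i ∨ G₂.anc v k) ∧ v ≠ i ∧ v ≠ k} with hC₀
  have hjC : j ∈ C₀ := by
    refine ⟨?_, fun h => hij' h.symm, fun h => hkj' h.symm⟩
    rcases hjik with h | h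
    · exact Or.inl (Relation.ReflTransGen.single h)
    · exact Or.inr (Relation.ReflTransGen.single h)
  have sep2 : G₂.mSep {i} {k} C₀ := sep_anc h2 hik hna2
  have d1 : Disjoint ({i} : Set V) {k} := by
    rw [Set.disjoint_singleton_left]; simpa using hik
  have d2 : Disjoint ({i} : Set V) C₀ := by
    rw [Set.disjoint_singleton_left]; intro h; exact h.2.1 rfl
  have d3 : Disjoint ({k} : Set V) C₀ := by
    rw [Set.disjoint_singleton_left]; intro h; exact h.2.2 rfl
  have sep1 : G₁.mSep {i} {k} C₀ := (hme {i} {k} C₀ d1 d2 d3).2 sep2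
  have hcol : G₁.collider i j k := ⟨Or.inl hij, Or.inl hkj⟩
  refine sep1 ⟨i, k, [i, j, k], rfl, rfl, ⟨⟨?_, ?_⟩, ?_, rfl, rfl, ?_⟩⟩
  · simp [hij', hik, hkj'.symm]
  · refine List.isChain_cons_cons.2 ⟨Or.inr (Or.inl hij), ?_⟩
    exact List.isChain_cons_cons.2 ⟨adj_symm (Or.inr (Or.inl hkj)), List.isChain_singleton _⟩
  · simp
  · exact ⟨⟨fun _ => Or.inl hjC, fun h => absurd hcol h⟩, trivial⟩
/-! ### reach, dist, cost -/

def reachN (G : MixedGraph V) (C : Set V) : ℕ → V → Prop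
  | 0, b => b ∈ C
  | n+1, b => ∃ c, G.arrow b c ∧ reachN G C n c

lemma reach_of_anc {x b : V} (hx : x ∈ C) (h : G.anc b x) : ∃ n, reachN G C n b := by
  induction h using Relation.ReflTransGen.head_induction_on with
  | refl => exact ⟨0, hx⟩
  | head hab _ ih => obtain ⟨n, hn⟩ := ih; exact ⟨n+1, _, hab, hn⟩

lemma anc_of_reach : ∀ (n : ℕ) (b : V), reachN G C n b → ∃ x ∈ C, G.anc b x
  | 0, b, h => ⟨b, h, Relation.ReflTransGen.refl⟩
  | n+1, b, ⟨c, hc, h⟩ =>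
    let ⟨x, hx, ha⟩ := anc_of_reach n c h
    ⟨x, hx, Relation.ReflTransGen.head hc ha⟩

noncomputable def distC (G : MixedGraph V) (C : Set V) (b : V) : ℕ :=
  sInf {n | reachN G C n b}

open Classical in
noncomputable def w3 (G : MixedGraph V) (C : Set V) (a b c : V) : ℕ :=
  if G.collider a b c ∧ b ∉ C then distC G C b else 0

noncomputable def cost (G : MixedGraph V) (C : Set V) : List V → ℕ
  | a::b::c::rest => w3 G C a b c + cost G C (b::c::rest)
  | _ => 0

lemma cost_short {p : List V} (h : p.length ≤ 2) : cost G C p = 0 := by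
  match p with
  | [] => rfl
  | [a] => rfl
  | [a,b] => rfl
  | a::b::c::r => simp at h

lemma cost_cons3 {a b c : V} {r : List V} :
    cost G C (a::b::c::r) = w3 G C a b c + cost G C (b::c::r) := rfl

lemma cost_glue : ∀ (xs : List V) (a b : V) (ys : List V),
    cost G C (xs ++ a::b::ys) = cost G C (xs ++ [a,b]) + cost G C (a::b::ys)
  | [], a, b, ys => by simp [cost_short (by simp : ([a,b] : List V).length ≤ 2)]
  | [x], a, b, ys => by
    cases ys with
    | nil =>
      show cost G C [x,a,b] = cost G C [x,a,b] + cost G C [a,b]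
      rw [cost_short (by simp : ([a,b] : List V).length ≤ 2)]
      ring
    | cons y ys =>
      show w3 G C x a b + cost G C (a::b::y::ys) = cost G C [x,a,b] + _
      rw [show cost G C [x,a,b] = w3 G C x a b + cost G C [a,b] from rfl]
      rw [cost_short (by simp : ([a,b] : List V).length ≤ 2)]
      ring
  | x::x'::xs, a, b, ys => by
    have H := cost_glue (x'::xs) a b ys
    cases xs with
    | nil =>
      show w3 G C x x' a + cost G C (x'::a::b::ys) = (w3 G C x x' a + cost G C [x',a,b]) + _
      simp only [List.singleton_append, List.cons_append, List.nil_append] at H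
      rw [H]; ring
    | cons x'' xs =>
      simp only [List.cons_append] at H ⊢
      rw [cost_cons3, cost_cons3, H]; ring

noncomputable def lastW (G : MixedGraph V) (C : Set V) (u : List V) (a x : V) : ℕ :=
  (u.getLast?).elim 0 (fun w => w3 G C w a x)

lemma cost_snoc2 : ∀ (u : List V) (a x : V),
    cost G C (u ++ [a, x]) = cost G C (u ++ [a]) + lastW G C u a x
  | [], a, x => by simp [cost_short, lastW]
  | [w], a, x => by
    show w3 G C w a x + cost G C [a,x] = cost G C [w,a] + _
    simp [cost_short, lastW]
  | w::w'::u, a, x => by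
    have H := cost_snoc2 (w'::u) a x
    have hL : lastW G C (w::w'::u) a x = lastW G C (w'::u) a x := by
      unfold lastW; rw [List.getLast?_cons_cons]
    rw [hL]
    cases u with
    | nil =>
      show w3 G C w w' a + cost G C (w'::a::x::[]) = cost G C (w::w'::a::[]) + _
      simp only [List.singleton_append, List.cons_append, List.nil_append] at H
      rw [show cost G C (w::w'::a::[]) = w3 G C w w' a + cost G C [w',a] from rfl]
      rw [H]; ring
    | cons w'' u =>
      simp only [List.cons_append] at H ⊢
      rw [cost_cons3, cost_cons3, H]; ring

/-! ### descent transfer -/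

lemma DT (h1 : G₁.isDAG) (h2 : G₂.isDAG) (hsk : G₁.sameSkeleton G₂)
    (huc : ∀ i j k, G₁.unshieldedCollision i j k ↔ G₂.unshieldedCollision i j k) :
    ∀ (n : ℕ) (b e : V),
    (∀ m, m < n → ¬ reachN G₁ C m b) → reachN G₁ C n b →
    G₁.arrow e b → G₂.arrow e b →
    (∃ x ∈ C, G₂.anc b x) ∨ (1 ≤ n ∧ ∃ d, G₁.arrow e d ∧ reachN G₁ C (n-1) d) := by
  intro n
  induction n with
  | zero =>
    intro b e _ hr _ _
    exact Or.inl ⟨b, hr, Relation.ReflTransGen.refl⟩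
  | succ n ih =>
    intro b e hmin hr heb heb2
    obtain ⟨d, hbd, hrd⟩ := hr
    have hmind : ∀ m, m < n → ¬ reachN G₁ C m d := by
      intro m hm hmd
      exact hmin (m+1) (by omega) ⟨d, hbd, hmd⟩
    by_cases hbd2 : G₂.arrow b d
    · rcases ih d b hmind hrd hbd hbd2 with ⟨x, hx, hanc⟩ | ⟨hn1, d', hbd', hrd'⟩
      · exact Or.inl ⟨x, hx, Relation.ReflTransGen.head hbd2 hanc⟩
      · exfalso
        have hnb : reachN G₁ C ((n-1)+1) b := ⟨d', hbd', hrd'⟩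
        rw [Nat.sub_add_cancel hn1] at hnb
        exact hmin n (by omega) hnb
    · -- the first descent edge is reversed in G₂
      have hdb2 : G₂.arrow d b := by
        have hadj : G₂.adj b d := (hsk b d).1 (Or.inr (Or.inl hbd))
        exact arrow_of_adj h2 (adj_symm hadj) hbd2
      have hed : e ≠ d := by
        rintro rfl; exact arrow_asymm h1 heb hbd
      have hadj_ed : G₁.adj e d := by
        by_contra hne
        have huc2 : G₂.unshieldedCollision e b d :=
          ⟨heb2, hdb2, hed, fun h => hne ((hsk e d).2 h)⟩
        have := ((huc e b d).2 huc2).2.1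
        exact arrow_asymm h1 hbd this
      have hearrow : G₁.arrow e d := by
        refine arrow_of_adj h1 hadj_ed fun hde => ?_
        exact h1.2.2 e (Relation.TransGen.head heb (Relation.TransGen.head hbd
          (Relation.TransGen.single hde)))
      exact Or.inr ⟨by omega, d, hearrow, by simpa using hrd⟩
/-! ### connecting walks -/

/-- connecting walk (no Nodup requirement) -/
def Gconn (G : MixedGraph V) (C : Set V) (i j : V) (p : List V) : Prop :=
  List.Chain' G.adj p ∧ 2 ≤ p.length ∧ p.head? = some i ∧ p.getLast? = some j ∧
    G.innerOK C p

lemma cut (hG : G.isDAG) {i j : V} (hij : i ≠ j) {p : List V}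
    (hc : Gconn G C i j p) (hnd : ¬ p.Nodup) :
    ∃ p', Gconn G C i j p' ∧ p'.length < p.length := by
  obtain ⟨hch, hlen, hhead, hlast, hok⟩ := hc
  obtain ⟨e, x, m, f, rfl⟩ := not_nodup_decomp hnd
  have hmne : m ≠ [] := by
    rintro rfl
    have : List.Chain' G.adj [x, x] := hch.infix ⟨e, f, by simp⟩
    exact adj_irrefl hG (List.isChain_cons_cons.1 this).1
  -- head and last of the shortened walk
  have hh : (e ++ x::f).head? = some i := by
    cases e with
    | nil => simpa using hhead
    | cons a e' => simpa using hhead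
  have hl : (e ++ x::f).getLast? = some j := by
    rw [getLast?_append_cons]
    rw [show e ++ x::(m++x::f) = (e++x::m)++x::f by simp, getLast?_append_cons] at hlast
    exact hlast
  have hchain : List.Chain' G.adj (e ++ x::f) := by
    refine List.isChain_append.2 ?_
    refine ⟨hch.infix ⟨[], x::(m++x::f), by simp⟩,
      hch.infix ⟨e++x::m, [], by simp⟩, ?_⟩
    have := (List.isChain_append.1 hch).2.2
    intro w hw y hy
    simp only [List.head?_cons, Option.mem_def, Option.some.injEq] at hy
    subst hy
    exact this w hw x (by simp)
  have hinner : G.innerOK C (e ++ x::f) := by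
    rcases List.eq_nil_or_concat e with rfl | ⟨e', w, rfl⟩
    · exact innerOK_infix hok (by simp : [] ++ x::(m++x::f) = ([] ++ x::m) ++ (x::f) ++ [])
    · -- e = e' ++ [w]
      simp only [List.concat_eq_append] at hch hok hh hl hchain hhead hlast ⊢
      have hhalf1 : G.innerOK C (e' ++ [w, x]) :=
        (innerOK_glue e' w x (m++x::f)).1
          (by simpa [List.append_assoc] using hok) |>.1
      rw [show (e'++[w]) ++ x::f = e' ++ w::x::f by simp, innerOK_glue e' w x f]
      refine ⟨hhalf1, ?_⟩
      cases f with
      | nil => exact innerOK_two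
      | cons cf f' =>
        rw [innerOK_cons3]
        have htail : G.innerOK C (x::cf::f') :=
          innerOK_infix hok
            (by simp : (e'++[w]) ++ x::(m++x::cf::f') = ((e'++[w])++x::m) ++ (x::cf::f') ++ [])
        refine ⟨?_, htail⟩
        -- the crux triple (w, x, cf)
        obtain ⟨hm, m', rfl⟩ : ∃ hm m', m = hm::m' := by
          cases m with
          | nil => exact absurd rfl hmne
          | cons a b => exact ⟨a, b, rfl⟩
        obtain ⟨m'', lm, heq⟩ := (List.eq_nil_or_concat (hm::m')).resolve_left (by simp)
        rw [List.concat_eq_append] at heq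
        have okA : ok3 G C w x hm := (innerOK_iff _).1 hok e' w x hm (m'++x::cf::f')
          (by simp)
        have okB : ok3 G C lm x cf := (innerOK_iff _).1 hok ((e'++[w])++x::m'') lm x cf f'
          (by rw [heq]; simp)
        constructor
        · intro hcol
          by_cases hwxh : G.collider w x hm
          · exact okA.1 hwxh
          · have hxhm : G.arrow x hm := by
              have hadj : G.adj x hm := by
                have : List.Chain' G.adj [x, hm] :=
                  hch.infix ⟨e'++[w], m'++x::cf::f', by simp⟩
                exact (List.isChain_cons_cons.1 this).1
              refine arrow_of_adj hG hadj fun h => ?_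
              exact hwxh ⟨hcol.1, (dag_headAt hG).2 h⟩
            have hs : (e'++[w]) ++ x::(hm::m'++x::cf::f') =
                (e'++[w]) ++ (x::hm::(m'++[x])) ++ (cf::f') := by simp
            have hchs : List.Chain' G.adj (x::hm::(m'++[x])) :=
              hch.infix ⟨e'++[w], cf::f', hs.symm⟩
            have hoks : G.innerOK C (x::hm::(m'++[x])) := innerOK_infix hok hs
            rcases follow hG (m'++[x]) x hm hchs hoks hxhm with h | h
            · exact Or.inr h
            · exfalso
              have hanc : G.anc hm x := by
                refine chain_anc _ hm x (List.isChain_cons_cons.1 h).2 ?_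
                rw [show hm::(m'++[x]) = (hm::m')++x::[] by simp,
                  getLast?_append_cons]
                rfl
              exact hG.2.2 hm (Relation.TransGen.tail' hanc hxhm)
        · intro hncol
          rcases Classical.em (G.headAt w x) with hw | hw
          · have : ¬ G.headAt cf x := fun h => hncol ⟨hw, h⟩
            exact okB.2 fun hc => this hc.2
          · exact okA.2 fun hc => absurd hc.1 hw
  exact ⟨e ++ x::f, ⟨hchain, length_ge_two hh hl hij, hh, hl, hinner⟩, by simp⟩
/-! ### generic walk rewrites -/

section Rewrites
variable {i j : V}

lemma head?_same {u : List V} {a : V} {r r' : List V}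
    (h : (u ++ a::r).head? = some i) : (u ++ a::r').head? = some i := by
  cases u with
  | nil => simpa using h
  | cons z u' => simpa using h

lemma gshortcut (hij : i ≠ j) {u : List V} {a b c : V} {v : List V}
    (hc : Gconn G C i j (u++a::b::c::v))
    (hadj : G.adj a c)
    (hA : ∀ w, u.getLast? = some w → ok3 G C w a c)
    (hB : ∀ y v', v = y::v' → ok3 G C a c y) :
    Gconn G C i j (u++a::c::v) := by
  obtain ⟨hch, hlen, hhead, hlast, hok⟩ := hc
  have hh : (u ++ a::c::v).head? = some i := head?_same hhead
  have hl : (u ++ a::c::v).getLast? = some j := by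
    rw [show u++a::c::v = (u++[a])++c::v by simp, getLast?_append_cons]
    rw [show u++a::b::c::v = (u++[a,b])++c::v by simp, getLast?_append_cons] at hlast
    exact hlast
  refine ⟨?_, length_ge_two hh hl hij, hh, hl, ?_⟩
  · refine List.isChain_append.2 ?_
    refine ⟨hch.infix ⟨[], a::b::c::v, by simp⟩, ?_, ?_⟩
    · exact List.isChain_cons_cons.2 ⟨hadj, hch.infix ⟨u++[a,b], [], by simp⟩⟩
    · have := (List.isChain_append.1 hch).2.2
      intro w hw y hy
      simp only [List.head?_cons, Option.mem_def, Option.some.injEq] at hy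
      subst hy
      exact this w hw a (by simp)
  · have htail : G.innerOK C (a::c::v) := by
      cases v with
      | nil => exact innerOK_two
      | cons y v' =>
        refine innerOK_cons3.2 ⟨hB y v' rfl, ?_⟩
        exact innerOK_infix hok (by simp : u++a::b::c::y::v' = (u++[a,b]) ++ (c::y::v') ++ [])
    rcases List.eq_nil_or_concat u with rfl | ⟨u', w, rfl⟩
    · simpa using htail
    · rw [List.concat_eq_append] at *
      rw [show (u'++[w])++a::c::v = u' ++ w::a::c::v by simp, innerOK_glue]
      refine ⟨?_, innerOK_cons3.2 ⟨hA w (by rw [getLast?_append_cons]; rfl), htail⟩⟩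
      exact ((innerOK_glue u' w a (b::c::v)).1 (by simpa using hok)).1

lemma greplace (hij : i ≠ j) {u : List V} {a b d c : V} {v : List V}
    (hc : Gconn G C i j (u++a::b::c::v))
    (had : G.adj a d) (hdc : G.adj d c)
    (hA : ∀ w, u.getLast? = some w → ok3 G C w a d)
    (hMid : ok3 G C a d c)
    (hB : ∀ y v', v = y::v' → ok3 G C d c y) :
    Gconn G C i j (u++a::d::c::v) := by
  obtain ⟨hch, hlen, hhead, hlast, hok⟩ := hc
  have hh : (u ++ a::d::c::v).head? = some i := head?_same hhead
  have hl : (u ++ a::d::c::v).getLast? = some j := by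
    rw [show u++a::d::c::v = (u++[a,d])++c::v by simp, getLast?_append_cons]
    rw [show u++a::b::c::v = (u++[a,b])++c::v by simp, getLast?_append_cons] at hlast
    exact hlast
  refine ⟨?_, length_ge_two hh hl hij, hh, hl, ?_⟩
  · refine List.isChain_append.2 ?_
    refine ⟨hch.infix ⟨[], a::b::c::v, by simp⟩, ?_, ?_⟩
    · refine List.isChain_cons_cons.2 ⟨had, List.isChain_cons_cons.2 ⟨hdc, ?_⟩⟩
      exact hch.infix ⟨u++[a,b], [], by simp⟩
    · have := (List.isChain_append.1 hch).2.2
      intro w hw y hy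
      simp only [List.head?_cons, Option.mem_def, Option.some.injEq] at hy
      subst hy
      exact this w hw a (by simp)
  · have htail : G.innerOK C (d::c::v) := by
      cases v with
      | nil => exact innerOK_two
      | cons y v' =>
        refine innerOK_cons3.2 ⟨hB y v' rfl, ?_⟩
        exact innerOK_infix hok (by simp : u++a::b::c::y::v' = (u++[a,b]) ++ (c::y::v') ++ [])
    have htail2 : G.innerOK C (a::d::c::v) := innerOK_cons3.2 ⟨hMid, htail⟩
    rcases List.eq_nil_or_concat u with rfl | ⟨u', w, rfl⟩
    · simpa using htail2
    · rw [List.concat_eq_append] at *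
      rw [show (u'++[w])++a::d::c::v = u' ++ w::a::(d::c::v) by simp, innerOK_glue]
      refine ⟨?_, innerOK_cons3.2 ⟨hA w (by rw [getLast?_append_cons]; rfl), htail2⟩⟩
      exact ((innerOK_glue u' w a (b::c::v)).1 (by simpa using hok)).1

lemma gdropleft (hij : i ≠ j) {u' : List V} {x a b c : V} {v : List V}
    (hc : Gconn G C i j (u'++x::a::b::c::v))
    (hadj : G.adj x b)
    (hA : ∀ w, u'.getLast? = some w → ok3 G C w x b)
    (hMid : ok3 G C x b c) :
    Gconn G C i j (u'++x::b::c::v) := by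
  obtain ⟨hch, hlen, hhead, hlast, hok⟩ := hc
  have hh : (u' ++ x::b::c::v).head? = some i := head?_same hhead
  have hl : (u' ++ x::b::c::v).getLast? = some j := by
    rw [show u'++x::b::c::v = (u'++[x,b])++c::v by simp, getLast?_append_cons]
    rw [show u'++x::a::b::c::v = (u'++[x,a,b])++c::v by simp, getLast?_append_cons] at hlast
    exact hlast
  refine ⟨?_, length_ge_two hh hl hij, hh, hl, ?_⟩
  · refine List.isChain_append.2 ?_
    refine ⟨hch.infix ⟨[], x::a::b::c::v, by simp⟩, ?_, ?_⟩
    · refine List.isChain_cons_cons.2 ⟨hadj, ?_⟩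
      exact hch.infix ⟨u'++[x,a], [], by simp⟩
    · have := (List.isChain_append.1 hch).2.2
      intro w hw y hy
      simp only [List.head?_cons, Option.mem_def, Option.some.injEq] at hy
      subst hy
      exact this w hw x (by simp)
  · have htail : G.innerOK C (b::c::v) :=
      innerOK_infix hok (by simp : u'++x::a::b::c::v = (u'++[x,a]) ++ (b::c::v) ++ [])
    rw [show u'++x::b::c::v = u'++[x,b] ++ (c::v) from by simp,
      show u'++[x,b] ++ (c::v) = u' ++ x::b::(c::v) from by simp, innerOK_glue]
    refine ⟨?_, innerOK_cons3.2 ⟨hMid, htail⟩⟩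
    rw [innerOK_snoc2]
    refine ⟨innerOK_infix hok (by simp : u'++x::a::b::c::v = [] ++ (u'++[x]) ++ (a::b::c::v)), ?_⟩
    intro w hw
    exact hA w hw

lemma gdropright (hij : i ≠ j) {u : List V} {a b c y : V} {v' : List V}
    (hc : Gconn G C i j (u++a::b::c::y::v'))
    (hadj : G.adj b y)
    (hMid : ok3 G C a b y)
    (hB : ∀ z v'', v' = z::v'' → ok3 G C b y z) :
    Gconn G C i j (u++a::b::y::v') := by
  obtain ⟨hch, hlen, hhead, hlast, hok⟩ := hc
  have hh : (u ++ a::b::y::v').head? = some i := head?_same hhead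
  have hl : (u ++ a::b::y::v').getLast? = some j := by
    rw [show u++a::b::y::v' = (u++[a,b])++y::v' by simp, getLast?_append_cons]
    rw [show u++a::b::c::y::v' = (u++[a,b,c])++y::v' by simp, getLast?_append_cons] at hlast
    exact hlast
  refine ⟨?_, length_ge_two hh hl hij, hh, hl, ?_⟩
  · refine List.isChain_append.2 ?_
    refine ⟨hch.infix ⟨[], a::b::c::y::v', by simp⟩, ?_, ?_⟩
    · refine List.isChain_cons_cons.2 ⟨?_, List.isChain_cons_cons.2 ⟨hadj, ?_⟩⟩
      · have : List.Chain' G.adj [a,b] := hch.infix ⟨u, c::y::v', by simp⟩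
        exact (List.isChain_cons_cons.1 this).1
      · exact hch.infix ⟨u++[a,b,c], [], by simp⟩
    · have := (List.isChain_append.1 hch).2.2
      intro w hw z hz
      simp only [List.head?_cons, Option.mem_def, Option.some.injEq] at hz
      subst hz
      exact this w hw a (by simp)
  · have htail : G.innerOK C (b::y::v') := by
      cases v' with
      | nil => exact innerOK_two
      | cons z v'' =>
        refine innerOK_cons3.2 ⟨hB z v'' rfl, ?_⟩
        exact innerOK_infix hok
          (by simp : u++a::b::c::y::z::v'' = (u++[a,b,c]) ++ (y::z::v'') ++ [])
    rw [show u++a::b::y::v' = u ++ a::b::(y::v') from rfl, innerOK_glue]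
    refine ⟨?_, innerOK_cons3.2 ⟨hMid, htail⟩⟩
    exact ((innerOK_glue u a b (c::y::v')).1 hok).1

end Rewrites
lemma exists_concat_of_getLast? {u : List V} {w : V} (h : u.getLast? = some w) :
    ∃ u', u = u' ++ [w] := by
  rcases List.eq_nil_or_concat u with rfl | ⟨u', w', rfl⟩
  · simp at h
  · rw [List.concat_eq_append] at *
    rw [getLast?_append_cons] at h
    simp only [List.getLast?_singleton, Option.some.injEq] at h
    exact ⟨u', by rw [h]⟩

lemma adj_of_arrow {i j : V} (h : G.arrow i j) : G.adj i j := Or.inr (Or.inl h)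
lemma adj_of_arrow' {i j : V} (h : G.arrow j i) : G.adj i j := Or.inr (Or.inr (Or.inl h))

/-- the key dichotomy: a triple that fails `ok3` in `G₂` yields a strictly
smaller connecting walk in `G₁`. -/
lemma triple_dichotomy (h1 : G₁.isDAG) (h2 : G₂.isDAG) (hsk : G₁.sameSkeleton G₂)
    (huc : ∀ i j k, G₁.unshieldedCollision i j k ↔ G₂.unshieldedCollision i j k)
    {i j : V} (hij : i ≠ j) (hiC : i ∉ C) (hjC : j ∉ C)
    {u : List V} {a b c : V} {v : List V}
    (hnd : (u ++ a::b::c::v).Nodup) (hc : Gconn G₁ C i j (u ++ a::b::c::v))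
    (hbad : ¬ ok3 G₂ C a b c) :
    ∃ p', Gconn G₁ C i j p' ∧
      (p'.length < (u ++ a::b::c::v).length ∨
       (p'.length = (u ++ a::b::c::v).length ∧
         cost G₁ C p' < cost G₁ C (u ++ a::b::c::v))) := by
  obtain ⟨hch, hlen, hhead, hlast, hok⟩ := hc
  have hc' : Gconn G₁ C i j (u ++ a::b::c::v) := ⟨hch, hlen, hhead, hlast, hok⟩
  have ok1 : ok3 G₁ C a b c := (innerOK_iff _).1 hok u a b c v rfl
  have hab : G₁.adj a b := by
    have : List.Chain' G₁.adj [a,b] := hch.infix ⟨u, c::v, by simp⟩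
    exact (List.isChain_cons_cons.1 this).1
  have hbc : G₁.adj b c := by
    have : List.Chain' G₁.adj [b,c] := hch.infix ⟨u++[a], v, by simp⟩
    exact (List.isChain_cons_cons.1 this).1
  have hanec : a ≠ c := by
    have hnd2 : (a::b::c::v).Nodup := nodup_of_decomp hnd rfl
    have := (List.nodup_cons.1 hnd2).1
    simp only [List.mem_cons] at this
    push_neg at this
    exact this.2.1
  by_cases hcol1 : G₁.collider a b c
  · -- Case A : collider in G₁
    have harr_ab : G₁.arrow a b := (dag_headAt h1).1 hcol1.1
    have harr_cb : G₁.arrow c b := (dag_headAt h1).1 hcol1.2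
    have hanc_b : G₁.collider a b c → b ∈ C ∨ ∃ x ∈ C, G₁.anc b x := ok1.1
    by_cases hac : G₁.adj a c
    · -- A1 : shielded collider, shortcut
      refine ⟨u ++ a::c::v, gshortcut hij hc' hac ?_ ?_, Or.inl (by simp)⟩
      · intro w hw
        obtain ⟨u', rfl⟩ := exists_concat_of_getLast? hw
        have okwa : ok3 G₁ C w a b := (innerOK_iff _).1 hok u' w a b (c::v) (by simp)
        have hba : ¬ G₁.headAt b a := fun h => arrow_asymm h1 harr_ab ((dag_headAt h1).1 h)
        have haC : a ∉ C := okwa.2 fun h => absurd h.2 hba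
        constructor
        · intro _
          rcases hanc_b hcol1 with hbC | ⟨x, hx, hanc⟩
          · exact Or.inr ⟨b, hbC, Relation.ReflTransGen.single harr_ab⟩
          · exact Or.inr ⟨x, hx, Relation.ReflTransGen.head harr_ab hanc⟩
        · intro _; exact haC
      · intro y v' hv
        subst hv
        have okcy : ok3 G₁ C b c y := (innerOK_iff _).1 hok (u++[a]) b c y v' (by simp)
        have hbc' : ¬ G₁.headAt b c := fun h => arrow_asymm h1 harr_cb ((dag_headAt h1).1 h)
        have hcC : c ∉ C := okcy.2 fun h => absurd h.1 hbc'
        constructor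
        · intro _
          rcases hanc_b hcol1 with hbC | ⟨x, hx, hanc⟩
          · exact Or.inr ⟨b, hbC, Relation.ReflTransGen.single harr_cb⟩
          · exact Or.inr ⟨x, hx, Relation.ReflTransGen.head harr_cb hanc⟩
        · intro _; exact hcC
    · -- A2 : unshielded collider
      have huc2 := (huc a b c).1 ⟨harr_ab, harr_cb, hanec, hac⟩
      have hcol2 : G₂.collider a b c := ⟨Or.inl huc2.1, Or.inl huc2.2.1⟩
      have hnot : ¬ (b ∈ C ∨ ∃ x ∈ C, G₂.anc b x) := by
        intro hyp
        exact hbad ⟨fun _ => hyp, fun hn => absurd hcol2 hn⟩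
      have hbC : b ∉ C := fun h => hnot (Or.inl h)
      have hanc1 : ∃ x ∈ C, G₁.anc b x := (hanc_b hcol1).resolve_left hbC
      obtain ⟨x₀, hx₀, hax₀⟩ := hanc1
      obtain ⟨n, hn⟩ := reach_of_anc hx₀ hax₀
      have hne0 : {n | reachN G₁ C n b}.Nonempty := ⟨n, hn⟩
      have hmem : reachN G₁ C (sInf {n | reachN G₁ C n b}) b := Nat.sInf_mem hne0
      have hminimal : ∀ m, m < sInf {n | reachN G₁ C n b} → ¬ reachN G₁ C m b :=
        fun m hm hr => Nat.notMem_of_lt_sInf hm hr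
      obtain ⟨n', hn'⟩ : ∃ n', sInf {n | reachN G₁ C n b} = n' + 1 := by
        cases hh : sInf {n | reachN G₁ C n b} with
        | zero => rw [hh] at hmem; exact absurd hmem hbC
        | succ k => exact ⟨k, rfl⟩
      rw [hn'] at hmem hminimal
      obtain ⟨d, hbd, hrd⟩ := hmem
      have hmind : ∀ m, m < n' → ¬ reachN G₁ C m d := by
        intro m hm hmd
        exact hminimal (m+1) (by omega) ⟨d, hbd, hmd⟩
      by_cases hbd2 : G₂.arrow b d
      · exfalso
        rcases DT h1 h2 hsk huc n' d b hmind hrd hbd hbd2 with ⟨x, hx, hanc⟩ | ⟨hn1, d', hbd', hrd'⟩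
        · exact hnot (Or.inr ⟨x, hx, Relation.ReflTransGen.head hbd2 hanc⟩)
        · have hnb : reachN G₁ C ((n'-1)+1) b := ⟨d', hbd', hrd'⟩
          rw [Nat.sub_add_cancel hn1] at hnb
          exact hminimal n' (by omega) hnb
      · -- first descent edge reversed in G₂, rewrite b ↦ d
        have hdb2 : G₂.arrow d b :=
          arrow_of_adj h2 (adj_symm ((hsk b d).1 (adj_of_arrow hbd))) hbd2
        have had : G₁.arrow a d := by
          have hand : a ≠ d := by rintro rfl; exact arrow_asymm h1 harr_ab hbd
          have hadj : G₁.adj a d := by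
            by_contra hne
            have := ((huc a b d).2 ⟨huc2.1, hdb2, hand, fun h => hne ((hsk a d).2 h)⟩).2.1
            exact arrow_asymm h1 hbd this
          refine arrow_of_adj h1 hadj fun hda => ?_
          exact h1.2.2 a (Relation.TransGen.head harr_ab
            (Relation.TransGen.head hbd (Relation.TransGen.single hda)))
        have hcd : G₁.arrow c d := by
          have hcnd : c ≠ d := by rintro rfl; exact arrow_asymm h1 harr_cb hbd
          have hadj : G₁.adj c d := by
            by_contra hne
            have := ((huc c b d).2 ⟨huc2.2.1, hdb2, hcnd, fun h => hne ((hsk c d).2 h)⟩).2.1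
            exact arrow_asymm h1 hbd this
          refine arrow_of_adj h1 hadj fun hdc => ?_
          exact h1.2.2 c (Relation.TransGen.head harr_cb
            (Relation.TransGen.head hbd (Relation.TransGen.single hdc)))
        have hgc : Gconn G₁ C i j (u ++ a::d::c::v) := by
          refine greplace hij hc' (adj_of_arrow had) (adj_of_arrow' hcd) ?_ ?_ ?_
          · intro w hw
            obtain ⟨u', rfl⟩ := exists_concat_of_getLast? hw
            have okwa : ok3 G₁ C w a b := (innerOK_iff _).1 hok u' w a b (c::v) (by simp)
            have hba : ¬ G₁.headAt b a := fun h => arrow_asymm h1 harr_ab ((dag_headAt h1).1 h)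
            have hda : ¬ G₁.headAt d a := fun h => arrow_asymm h1 had ((dag_headAt h1).1 h)
            exact ⟨fun hcc => absurd hcc.2 hda, fun _ => okwa.2 fun h => absurd h.2 hba⟩
          · constructor
            · intro _
              obtain ⟨x, hx, hanc⟩ := anc_of_reach n' d hrd
              exact Or.inr ⟨x, hx, hanc⟩
            · intro hn
              exact absurd ⟨(dag_headAt h1).2 had, (dag_headAt h1).2 hcd⟩ hn
          · intro y v' hv
            subst hv
            have okcy : ok3 G₁ C b c y := (innerOK_iff _).1 hok (u++[a]) b c y v' (by simp)
            have hbc' : ¬ G₁.headAt b c := fun h => arrow_asymm h1 harr_cb ((dag_headAt h1).1 h)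
            have hdc' : ¬ G₁.headAt d c := fun h => arrow_asymm h1 hcd ((dag_headAt h1).1 h)
            exact ⟨fun hcc => absurd hcc.1 hdc', fun _ => okcy.2 fun h => absurd h.1 hbc'⟩
        refine ⟨u ++ a::d::c::v, hgc, Or.inr ⟨by simp, ?_⟩⟩
        -- cost strictly decreases
        have e1 := cost_glue (G := G₁) (C := C) u a b (c::v)
        have e2 := cost_glue (G := G₁) (C := C) u a d (c::v)
        have e3 := cost_snoc2 (G := G₁) (C := C) u a b
        have e4 := cost_snoc2 (G := G₁) (C := C) u a d
        have hba : ¬ G₁.headAt b a := fun h => arrow_asymm h1 harr_ab ((dag_headAt h1).1 h)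
        have hda : ¬ G₁.headAt d a := fun h => arrow_asymm h1 had ((dag_headAt h1).1 h)
        have eL : lastW G₁ C u a b = lastW G₁ C u a d := by
          unfold lastW
          cases hu : u.getLast? with
          | none => rfl
          | some w =>
            show w3 G₁ C w a b = w3 G₁ C w a d
            unfold w3
            rw [if_neg fun h => absurd h.1.2 hba, if_neg fun h => absurd h.1.2 hda]
        have ew1 : w3 G₁ C a b c = n' + 1 := by
          unfold w3
          rw [if_pos ⟨hcol1, hbC⟩]
          unfold distC
          exact hn'
        have ew2 : w3 G₁ C a d c ≤ n' := by
          unfold w3 distC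
          split
          · exact Nat.sInf_le hrd
          · omega
        have etail : cost G₁ C (b::c::v) = cost G₁ C (d::c::v) := by
          cases v with
          | nil => rw [cost_short (by simp), cost_short (by simp)]
          | cons y v' =>
            rw [cost_cons3, cost_cons3]
            have hbc' : ¬ G₁.headAt b c := fun h => arrow_asymm h1 harr_cb ((dag_headAt h1).1 h)
            have hdc' : ¬ G₁.headAt d c := fun h => arrow_asymm h1 hcd ((dag_headAt h1).1 h)
            have : w3 G₁ C b c y = 0 := by
              unfold w3; rw [if_neg fun h => absurd h.1.1 hbc']
            have h2' : w3 G₁ C d c y = 0 := by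
              unfold w3; rw [if_neg fun h => absurd h.1.1 hdc']
            rw [this, h2']
        rw [e1, e2, e3, e4, cost_cons3, cost_cons3, eL, etail, ew1]
        omega
  · -- Case B : non-collider in G₁
    have hbC : b ∉ C := ok1.2 hcol1
    have hcol2 : G₂.collider a b c := by
      by_contra hnc
      exact hbad ⟨fun hcc => absurd hcc hnc, fun _ => hbC⟩
    have harr2_ab : G₂.arrow a b := (dag_headAt h2).1 hcol2.1
    have harr2_cb : G₂.arrow c b := (dag_headAt h2).1 hcol2.2
    have hac : G₁.adj a c := by
      by_contra hne
      have := (huc a b c).2 ⟨harr2_ab, harr2_cb, hanec, fun h => hne ((hsk a c).2 h)⟩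
      exact hcol1 ⟨Or.inl this.1, Or.inl this.2.1⟩
    rcases (dag_adj h1).1 hab with hab1 | hba1
    · rcases (dag_adj h1).1 (adj_symm hbc) with hcb1 | hbc1
      · exact absurd ⟨Or.inl hab1, Or.inl hcb1⟩ hcol1
      · -- B1 : a → b → c
        have hac1 : G₁.arrow a c := by
          refine arrow_of_adj h1 hac fun hca => ?_
          exact h1.2.2 a (Relation.TransGen.head hab1
            (Relation.TransGen.head hbc1 (Relation.TransGen.single hca)))
        refine ⟨u ++ a::c::v, gshortcut hij hc' hac ?_ ?_, Or.inl (by simp)⟩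
        · intro w hw
          obtain ⟨u', rfl⟩ := exists_concat_of_getLast? hw
          have okwa : ok3 G₁ C w a b := (innerOK_iff _).1 hok u' w a b (c::v) (by simp)
          have hba : ¬ G₁.headAt b a := fun h => arrow_asymm h1 hab1 ((dag_headAt h1).1 h)
          have hca : ¬ G₁.headAt c a := fun h => arrow_asymm h1 hac1 ((dag_headAt h1).1 h)
          exact ⟨fun hcc => absurd hcc.2 hca, fun _ => okwa.2 fun h => absurd h.2 hba⟩
        · intro y v' hv
          subst hv
          have okcy : ok3 G₁ C b c y := (innerOK_iff _).1 hok (u++[a]) b c y v' (by simp)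
          constructor
          · intro hcc
            exact okcy.1 ⟨(dag_headAt h1).2 hbc1, hcc.2⟩
          · intro hnc
            exact okcy.2 fun h => hnc ⟨(dag_headAt h1).2 hac1, h.2⟩
    · rcases (dag_adj h1).1 (adj_symm hbc) with hcb1 | hbc1
      · -- B2 : c → b → a
        have hca1 : G₁.arrow c a := by
          refine arrow_of_adj h1 (adj_symm hac) fun hac' => ?_
          exact h1.2.2 c (Relation.TransGen.head hcb1
            (Relation.TransGen.head hba1 (Relation.TransGen.single hac')))
        refine ⟨u ++ a::c::v, gshortcut hij hc' hac ?_ ?_, Or.inl (by simp)⟩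
        · intro w hw
          obtain ⟨u', rfl⟩ := exists_concat_of_getLast? hw
          have okwa : ok3 G₁ C w a b := (innerOK_iff _).1 hok u' w a b (c::v) (by simp)
          constructor
          · intro hcc
            exact okwa.1 ⟨hcc.1, (dag_headAt h1).2 hba1⟩
          · intro hnc
            exact okwa.2 fun h => hnc ⟨h.1, (dag_headAt h1).2 hca1⟩
        · intro y v' hv
          subst hv
          have okcy : ok3 G₁ C b c y := (innerOK_iff _).1 hok (u++[a]) b c y v' (by simp)
          have hbc' : ¬ G₁.headAt b c := fun h => arrow_asymm h1 hcb1 ((dag_headAt h1).1 h)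
          have hacn : ¬ G₁.headAt a c := fun h => arrow_asymm h1 hca1 ((dag_headAt h1).1 h)
          exact ⟨fun hcc => absurd hcc.1 hacn, fun _ => okcy.2 fun h => absurd h.1 hbc'⟩
      · -- B3 : b → a and b → c
        rcases (dag_adj h1).1 hac with hac1 | hca1
        · -- B3a : a → c
          by_cases haC : a ∈ C
          · -- a ∈ C : drop a, going from its other neighbour x directly to b
            obtain ⟨u', x, rfl⟩ : ∃ u' x, u = u' ++ [x] := by
              rcases List.eq_nil_or_concat u with rfl | ⟨u', x, rfl⟩
              · exfalso
                have : a = i := by simpa using hhead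
                exact hiC (this ▸ haC)
              · exact ⟨u', x, by rw [List.concat_eq_append]⟩
            have hok' : G₁.innerOK C (u' ++ x::a::b::c::v) := by simpa using hok
            have okxa : ok3 G₁ C x a b := (innerOK_iff _).1 hok u' x a b (c::v) (by simp)
            have hcol_xab : G₁.collider x a b := by
              by_contra h
              exact okxa.2 h haC
            have harr_xa : G₁.arrow x a := (dag_headAt h1).1 hcol_xab.1
            have hxb : x ≠ b := by
              have hnd2 : (x::a::b::c::v).Nodup :=
                nodup_of_decomp hnd (by simp : u'++[x]++a::b::c::v = u' ++ (x::a::b::c::v))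
              have := (List.nodup_cons.1 hnd2).1
              simp only [List.mem_cons] at this
              push_neg at this
              exact this.2.1
            have hadj_xb : G₁.adj x b := by
              by_contra hnadj
              have := ((huc x a b).1 ⟨harr_xa, hba1, hxb, hnadj⟩).2.1
              exact arrow_asymm h2 harr2_ab this
            have hc'' : Gconn G₁ C i j (u' ++ x::a::b::c::v) := by
              rw [show u' ++ x::a::b::c::v = (u'++[x]) ++ a::b::c::v by simp]
              exact hc'
            refine ⟨u' ++ x::b::c::v, gdropleft hij hc'' hadj_xb ?_ ?_,
              Or.inl (by simp)⟩
            · intro w hw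
              obtain ⟨u'', rfl⟩ := exists_concat_of_getLast? hw
              have okwx : ok3 G₁ C w x a := (innerOK_iff _).1 hok u'' w x a (b::c::v) (by simp)
              have hax : ¬ G₁.headAt a x := fun h => arrow_asymm h1 harr_xa ((dag_headAt h1).1 h)
              have hxC : x ∉ C := okwx.2 fun h => absurd h.2 hax
              exact ⟨fun _ => Or.inr ⟨a, haC, Relation.ReflTransGen.single harr_xa⟩,
                fun _ => hxC⟩
            · have hcbn : ¬ G₁.headAt c b := fun h => arrow_asymm h1 hbc1 ((dag_headAt h1).1 h)
              exact ⟨fun hcc => absurd hcc.2 hcbn, fun _ => hbC⟩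
          · -- a ∉ C : shortcut
            refine ⟨u ++ a::c::v, gshortcut hij hc' hac ?_ ?_, Or.inl (by simp)⟩
            · intro w hw
              have hca : ¬ G₁.headAt c a := fun h => arrow_asymm h1 hac1 ((dag_headAt h1).1 h)
              exact ⟨fun hcc => absurd hcc.2 hca, fun _ => haC⟩
            · intro y v' hv
              subst hv
              have okcy : ok3 G₁ C b c y := (innerOK_iff _).1 hok (u++[a]) b c y v' (by simp)
              constructor
              · intro hcc
                exact okcy.1 ⟨(dag_headAt h1).2 hbc1, hcc.2⟩
              · intro hnc
                exact okcy.2 fun h => hnc ⟨(dag_headAt h1).2 hac1, h.2⟩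
        · -- B3b : c → a
          by_cases hcC : c ∈ C
          · -- c ∈ C : drop c
            obtain ⟨y, v', rfl⟩ : ∃ y v', v = y::v' := by
              cases v with
              | nil =>
                exfalso
                have : c = j := by
                  rw [show u ++ a::b::c::[] = (u++[a,b]) ++ c::[] by simp,
                    getLast?_append_cons] at hlast
                  simpa using hlast
                exact hjC (this ▸ hcC)
              | cons y v' => exact ⟨y, v', rfl⟩
            have okcy : ok3 G₁ C b c y := (innerOK_iff _).1 hok (u++[a]) b c y v' (by simp)
            have hcol_bcy : G₁.collider b c y := by
              by_contra h
              exact okcy.2 h hcC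
            have harr_yc : G₁.arrow y c := (dag_headAt h1).1 hcol_bcy.2
            have hby : b ≠ y := by
              have hnd2 : (b::c::y::v').Nodup :=
                nodup_of_decomp hnd (by simp : u++a::b::c::y::v' = (u++[a]) ++ (b::c::y::v'))
              have := (List.nodup_cons.1 hnd2).1
              simp only [List.mem_cons] at this
              push_neg at this
              exact this.2.1
            have hadj_by : G₁.adj b y := by
              by_contra hnadj
              have := ((huc b c y).1 ⟨hbc1, harr_yc, hby, hnadj⟩).1
              exact arrow_asymm h2 harr2_cb this
            refine ⟨u ++ a::b::y::v', gdropright hij hc' hadj_by ?_ ?_,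
              Or.inl (by simp)⟩
            · have habn : ¬ G₁.headAt a b := fun h => arrow_asymm h1 hba1 ((dag_headAt h1).1 h)
              exact ⟨fun hcc => absurd hcc.1 habn, fun _ => hbC⟩
            · intro z v'' hv
              subst hv
              have okyz : ok3 G₁ C c y z := (innerOK_iff _).1 hok (u++[a,b]) c y z v'' (by simp)
              have hcy : ¬ G₁.headAt c y := fun h => arrow_asymm h1 harr_yc ((dag_headAt h1).1 h)
              have hyC : y ∉ C := okyz.2 fun h => absurd h.1 hcy
              exact ⟨fun _ => Or.inr ⟨c, hcC, Relation.ReflTransGen.single harr_yc⟩,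
                fun _ => hyC⟩
          · -- c ∉ C : shortcut
            refine ⟨u ++ a::c::v, gshortcut hij hc' hac ?_ ?_, Or.inl (by simp)⟩
            · intro w hw
              obtain ⟨u', rfl⟩ := exists_concat_of_getLast? hw
              have okwa : ok3 G₁ C w a b := (innerOK_iff _).1 hok u' w a b (c::v) (by simp)
              constructor
              · intro hcc
                exact okwa.1 ⟨hcc.1, (dag_headAt h1).2 hba1⟩
              · intro hnc
                exact okwa.2 fun h => hnc ⟨h.1, (dag_headAt h1).2 hca1⟩
            · intro y v' hv
              subst hv
              have hacn : ¬ G₁.headAt a c := fun h => arrow_asymm h1 hca1 ((dag_headAt h1).1 h)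
              exact ⟨fun hcc => absurd hcc.1 hacn, fun _ => hcC⟩
/-- main transfer: a connecting walk in `G₁` yields a connecting path in `G₂`. -/
lemma transfer (h1 : G₁.isDAG) (h2 : G₂.isDAG) (hsk : G₁.sameSkeleton G₂)
    (huc : ∀ i j k, G₁.unshieldedCollision i j k ↔ G₂.unshieldedCollision i j k)
    {i j : V} (hij : i ≠ j) (hiC : i ∉ C) (hjC : j ∉ C) :
    ∀ p, Gconn G₁ C i j p → ∃ q, G₂.mConnecting C i j q := by
  suffices main : ∀ L k p, p.length = L → cost G₁ C p = k → Gconn G₁ C i j p →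
      ∃ q, G₂.mConnecting C i j q by
    intro p hp
    exact main p.length (cost G₁ C p) p rfl rfl hp
  intro L
  induction L using Nat.strong_induction_on with
  | _ L IHL =>
    intro k
    induction k using Nat.strong_induction_on with
    | _ k IHk =>
      intro p hL hk hp
      by_cases hnd : p.Nodup
      · by_cases hok2 : G₂.innerOK C p
        · refine ⟨p, ⟨⟨hnd, ?_⟩, hp.2.1, hp.2.2.1, hp.2.2.2.1, hok2⟩⟩
          exact hp.1.imp fun x y h => (hsk x y).1 h
        · obtain ⟨u, a, b, c, v, hdec, hbad⟩ := not_innerOK_decomp hok2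
          subst hdec
          obtain ⟨p', hp', hless⟩ :=
            triple_dichotomy h1 h2 hsk huc hij hiC hjC hnd hp hbad
          rcases hless with hlt | ⟨heq, hcost⟩
          · exact IHL p'.length (by omega) (cost G₁ C p') p' rfl rfl hp'
          · exact IHk (cost G₁ C p') (by omega) p' (by omega) rfl hp'
      · obtain ⟨p', hp', hlt⟩ := cut h1 hij hp hnd
        exact IHL p'.length (by omega) (cost G₁ C p') p' rfl rfl hp'

lemma me_of_same (h1 : G₁.isDAG) (h2 : G₂.isDAG) (hsk : G₁.sameSkeleton G₂)
    (huc : ∀ i j k, G₁.unshieldedCollision i j k ↔ G₂.unshieldedCollision i j k) :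
    G₁.markovEquiv G₂ := by
  have hsk' : G₂.sameSkeleton G₁ := fun i j => (hsk i j).symm
  have huc' : ∀ i j k, G₂.unshieldedCollision i j k ↔ G₁.unshieldedCollision i j k :=
    fun i j k => (huc i j k).symm
  intro A B C dAB dAC dBC
  constructor
  · intro hsep
    rintro ⟨i, j, p, hi, hj, hp⟩
    have hij : i ≠ j := by
      rintro rfl
      exact Set.disjoint_left.1 dAB hi hj
    have hiC : i ∉ C := Set.disjoint_left.1 dAC hi
    have hjC : j ∉ C := Set.disjoint_left.1 dBC hj
    obtain ⟨q, hq⟩ := transfer h2 h1 hsk' huc' hij hiC hjC p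
      ⟨hp.1.2, hp.2.1, hp.2.2.1, hp.2.2.2.1, hp.2.2.2.2⟩
    exact hsep ⟨i, j, q, hi, hj, hq⟩
  · intro hsep
    rintro ⟨i, j, p, hi, hj, hp⟩
    have hij : i ≠ j := by
      rintro rfl
      exact Set.disjoint_left.1 dAB hi hj
    have hiC : i ∉ C := Set.disjoint_left.1 dAC hi
    have hjC : j ∉ C := Set.disjoint_left.1 dBC hj
    obtain ⟨q, hq⟩ := transfer h1 h2 hsk huc hij hiC hjC p
      ⟨hp.1.2, hp.2.1, hp.2.2.1, hp.2.2.2.1, hp.2.2.2.2⟩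
    exact hsep ⟨i, j, q, hi, hj, hq⟩

end MEquiv

/-- Two DAGs are Markov equivalent iff they have the same skeleton and the same
unshielded collision V-configurations. -/
theorem dag_markovEquiv_iff {V : Type*} [Fintype V] (G₁ G₂ : MixedGraph V)
    (h₁ : G₁.isDAG) (h₂ : G₂.isDAG) :
    G₁.markovEquiv G₂ ↔
      (G₁.sameSkeleton G₂ ∧
        ∀ i j k, G₁.unshieldedCollision i j k ↔ G₂.unshieldedCollision i j k) := by
  constructor
  · intro hme
    have hsk : G₁.sameSkeleton G₂ := fun i j =>
      ⟨MEquiv.adj_of_me h₁ h₂ hme, MEquiv.adj_of_me h₂ h₁ (MEquiv.markovEquiv_symm hme)⟩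
    refine ⟨hsk, fun i j k => ⟨MEquiv.uc_of_me h₁ h₂ hme hsk, ?_⟩⟩
    exact MEquiv.uc_of_me h₂ h₁ (MEquiv.markovEquiv_symm hme) fun i j => (hsk i j).symm
  · rintro ⟨hsk, huc⟩
    exact MEquiv.me_of_same h₁ h₂ hsk huc
end

section
/- Two Markov equivalent maximal ancestral graphs have the same skeleton. -/
/-- Two Markov equivalent maximal ancestral graphs have the same skeleton. -/
theorem mag_markovEquiv_sameSkeleton {V : Type*} [Fintype V] (H₁ H₂ : MixedGraph V)
    (h₁ : H₁.isMAG) (h₂ : H₂.isMAG) (h : H₁.markovEquiv H₂) :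
    H₁.sameSkeleton H₂ := by
  have key : ∀ (G G' : MixedGraph V), G.markovEquiv G' → G'.isMaximal →
      ∀ i j, G.adj i j → G'.adj i j := by
    intro G G' heq hmax i j hadj
    have hne : i ≠ j := by
      rintro rfl
      rcases hadj with h | h | h | h
      exacts [G.line_irrefl i h, G.arrow_irrefl i h, G.arrow_irrefl i h, G.arc_irrefl i h]
    by_contra hnadj
    obtain ⟨C, hiC, hjC, hsep⟩ := hmax i j hne hnadj
    have hsep' : G.mSep {i} {j} C := by
      refine (heq {i} {j} C ?_ ?_ ?_).mpr hsep
      · exact Set.disjoint_singleton_left.mpr hne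
      · exact Set.disjoint_singleton_left.mpr hiC
      · exact Set.disjoint_singleton_left.mpr hjC
    exact hsep' ⟨i, j, [i, j], rfl, rfl,
      ⟨by simp [hne], List.isChain_pair.mpr hadj⟩, by simp, rfl, by simp [List.getLast?],
      trivial⟩
  intro i j
  exact ⟨key H₁ H₂ h h₂.2 i j, key H₂ H₁ (fun A B C hab hac hbc => (h A B C hab hac hbc).symm)
    h₁.2 i j⟩
end

section
/- A maximal ancestral graph H with no unshielded collider V-configuration is Markov equivalent to the undirected graph obtained from H by removing all arrowheads (i.e., replacing every edge by a line). -/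
namespace MixedGraph
variable {V : Type*}

/-- The undirected graph obtained from `H` by removing all arrowheads,
i.e. replacing every edge by a line. -/
def toUG (H : MixedGraph V) : MixedGraph V where
  line := H.adj
  arrow _ _ := False
  arc _ _ := False
  line_symm := fun i j h => by
    rcases h with h | h | h | h
    · exact Or.inl (H.line_symm i j h)
    · exact Or.inr (Or.inr (Or.inl h))
    · exact Or.inr (Or.inl h)
    · exact Or.inr (Or.inr (Or.inr (H.arc_symm i j h)))
  arc_symm := fun _ _ h => h.elim
  line_irrefl := fun i h => by
    rcases h with h | h | h | h
    · exact H.line_irrefl i h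
    · exact H.arrow_irrefl i h
    · exact H.arrow_irrefl i h
    · exact H.arc_irrefl i h
  arrow_irrefl := fun _ h => h
  arc_irrefl := fun _ h => h

end MixedGraph


/-! ### Auxiliary development for the proof -/

section AuxList
variable {α : Type*}

theorem auxGetD_eq (p : List α) (d : α) {m : ℕ} (h : m < p.length) :
    p.getD m d = p[m] := by
  rw [List.getD_eq_getElem?_getD, List.getElem?_eq_getElem h]; rfl

theorem auxGetD_indep (p : List α) {m : ℕ} (h : m < p.length) (d d' : α) :
    p.getD m d = p.getD m d' := by
  rw [auxGetD_eq p d h, auxGetD_eq p d' h]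

theorem auxGetD_eraseIdx (p : List α) (i m : ℕ) (d : α) :
    (p.eraseIdx i).getD m d = if m < i then p.getD m d else p.getD (m+1) d := by
  rw [List.getD_eq_getElem?_getD, List.getElem?_eraseIdx]
  split <;> rw [List.getD_eq_getElem?_getD]

theorem auxGetD_reverse (p : List α) {m : ℕ} (hm : m < p.length) (d : α) :
    p.reverse.getD m d = p.getD (p.length - 1 - m) d := by
  have hm' : m < p.reverse.length := by simpa using hm
  rw [auxGetD_eq _ _ hm', auxGetD_eq _ _ (by omega : p.length - 1 - m < p.length)]
  exact List.getElem_reverse hm'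

theorem auxHead? (p : List α) (h : p ≠ []) (d : α) : p.head? = some (p.getD 0 d) := by
  cases p with
  | nil => exact absurd rfl h
  | cons a l => rfl

theorem auxLast? (p : List α) (h : p ≠ []) (d : α) :
    p.getLast? = some (p.getD (p.length - 1) d) := by
  have hl : p.length - 1 < p.length := by
    cases p with
    | nil => exact absurd rfl h
    | cons a l => simp
  rw [List.getLast?_eq_getElem?, List.getElem?_eq_getElem hl, auxGetD_eq p d hl]

theorem auxChain'_iff_getD {R : α → α → Prop} (p : List α) (d : α) :
    List.Chain' R p ↔ ∀ m, m + 1 < p.length → R (p.getD m d) (p.getD (m+1) d) := by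
  show List.IsChain R p ↔ _
  rw [List.isChain_iff_getElem]
  constructor
  · intro h m hm
    have h1 : m < p.length := by omega
    have h2 : m + 1 < p.length := hm
    have := h m (by omega)
    rwa [← auxGetD_eq p d h1, ← auxGetD_eq p d h2] at this
  · intro h m hm
    have h1 : m < p.length := by omega
    have h2 : m + 1 < p.length := by omega
    have := h m h2
    rwa [auxGetD_eq p d h1, auxGetD_eq p d h2] at this

theorem auxNodup_inj {p : List α} (hp : p.Nodup) (d : α) {m m' : ℕ}
    (hm : m < p.length) (hm' : m' < p.length) (h : p.getD m d = p.getD m' d) : m = m' := by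
  rw [auxGetD_eq p d hm, auxGetD_eq p d hm'] at h
  by_contra hne
  exact (List.Nodup.getElem_inj_iff hp).1 h |> hne

end AuxList

namespace MixedGraph
variable {V : Type*}

/-- `b` is in `C` or an ancestor of a node of `C`. -/
def AnC (G : MixedGraph V) (C : Set V) (b : V) : Prop :=
  b ∈ C ∨ ∃ x ∈ C, G.anc b x

/-- The inner-node condition at a single triple. -/
def trip (G : MixedGraph V) (C : Set V) (a b c : V) : Prop :=
  (G.collider a b c → G.AnC C b) ∧ (¬ G.collider a b c → b ∉ C)

theorem adj_symm {G : MixedGraph V} {x y : V} (h : G.adj x y) : G.adj y x := by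
  rcases h with h | h | h | h
  · exact Or.inl (G.line_symm _ _ h)
  · exact Or.inr (Or.inr (Or.inl h))
  · exact Or.inr (Or.inl h)
  · exact Or.inr (Or.inr (Or.inr (G.arc_symm _ _ h)))

theorem anC_of_anc {G : MixedGraph V} {C : Set V} {a b : V}
    (h : G.anc a b) (hb : G.AnC C b) : G.AnC C a := by
  rcases hb with hb | ⟨x, hx, hbx⟩
  · exact Or.inr ⟨b, hb, h⟩
  · exact Or.inr ⟨x, hx, h.trans hbx⟩

theorem trip_congr {G : MixedGraph V} {C : Set V} {a b c a' c' : V}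
    (h : G.collider a b c ↔ G.collider a' b c') (ht : G.trip C a b c) : G.trip C a' b c' :=
  ⟨fun hc => ht.1 (h.2 hc), fun hc => ht.2 (fun k => hc (h.1 k))⟩

theorem trip_comm {G : MixedGraph V} {C : Set V} {a b c : V}
    (ht : G.trip C a b c) : G.trip C c b a :=
  trip_congr (Iff.intro (fun h => ⟨h.2, h.1⟩) (fun h => ⟨h.2, h.1⟩)) ht

section Ancestral
variable {H : MixedGraph V} (hA : H.isAncestral)
include hA

theorem not_head_of_anc {x y : V} (h : H.anc x y) : ¬ H.headAt y x :=
  fun hh => hA.1 x y hh h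

theorem arc_of_heads {x y : V} (h1 : H.headAt x y) (h2 : H.headAt y x) : H.arc x y := by
  rcases h1 with h1 | h1
  · exact absurd h2 (not_head_of_anc hA (Relation.ReflTransGen.single h1))
  · exact h1

theorem arrow_of_adj {a c z : V} (h : H.adj a c) (hno : ¬ H.headAt c a)
    (hz : H.headAt z a) : H.arrow a c := by
  rcases h with h | h | h | h
  · exact absurd hz (hA.2 a c z h)
  · exact h
  · exact absurd (Or.inl h) hno
  · exact absurd (Or.inr (H.arc_symm a c h)) hno

theorem arrow_of_head_nothead {x y : V} (h1 : H.headAt x y) (h2 : ¬ H.headAt y x) :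
    H.arrow x y := by
  rcases h1 with h1 | h1
  · exact h1
  · exact absurd (Or.inr (H.arc_symm x y h1)) h2

/-- The key single-node failure analysis when shortcutting a collider. -/
theorem failNode {C : Set V} {w a b c : V}
    (hold : H.trip C w a b) (hcol : H.collider a b c) (hb : H.AnC C b)
    (hadj : H.adj a c) (hnew : ¬ H.trip C w a c) :
    a ∈ C ∧ H.headAt w a ∧ H.arc a b ∧ H.arc c b ∧ H.arrow a c := by
  classical
  obtain ⟨hab, hcb⟩ := hcol
  by_cases hba : H.headAt b a
  · have harc : H.arc a b := arc_of_heads hA hab hba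
    by_cases hca : H.headAt c a
    · refine absurd (trip_congr ?_ hold) hnew
      exact Iff.intro (fun h => ⟨h.1, hca⟩) (fun h => ⟨h.1, hba⟩)
    · have hnewcol : ¬ H.collider w a c := fun h => hca h.2
      have haC : a ∈ C := by
        by_contra haC
        exact hnew ⟨fun h => absurd h hnewcol, fun _ => haC⟩
      have hwa : H.headAt w a := by
        by_contra hwa
        exact hold.2 (fun h => hwa h.1) haC
      have hac : H.arrow a c := arrow_of_adj hA hadj hca hba
      have hcbarc : H.arc c b := by
        rcases hcb with h | h
        · exact absurd ((Relation.ReflTransGen.single hac).trans (Relation.ReflTransGen.single h))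
            (fun hanc => hA.1 a b (Or.inr (H.arc_symm a b harc)) hanc)
        · exact h
      exact ⟨haC, hwa, harc, hcbarc, hac⟩
  · have hab' : H.arrow a b := arrow_of_head_nothead hA hab hba
    have hAnCa : H.AnC C a := anC_of_anc (Relation.ReflTransGen.single hab') hb
    have haC : a ∉ C := hold.2 (fun h => hba h.2)
    exact absurd ⟨fun _ => hAnCa, fun _ => haC⟩ hnew

end Ancestral

end MixedGraph


namespace MixedGraph
variable {V : Type*}

set_option linter.unusedSectionVars false

theorem innerOK_iff_getD (G : MixedGraph V) (C : Set V) (d : V) :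
    ∀ p : List V, G.innerOK C p ↔
      ∀ m, m + 2 < p.length →
        G.trip C (p.getD m d) (p.getD (m+1) d) (p.getD (m+2) d)
  | [] => by simp [innerOK]
  | [a] => by simp [innerOK]
  | [a, b] => by simp [innerOK]
  | a :: b :: c :: r => by
    have hrec := innerOK_iff_getD G C d (b :: c :: r)
    constructor
    · rintro ⟨h0, h⟩ m hm
      cases m with
      | zero => exact h0
      | succ m =>
        have := (hrec.1 h) m (by simp at hm ⊢; omega)
        simpa [List.getD_cons_succ] using this
    · intro h
      refine ⟨?_, hrec.2 ?_⟩
      · exact h 0 (by simp)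
      · intro m hm
        have := h (m+1) (by simp at hm ⊢; omega)
        simpa [List.getD_cons_succ] using this

theorem mconn_iff_getD (G : MixedGraph V) (C : Set V) (i j : V) (p : List V) (d : V) :
    G.mConnecting C i j p ↔
      p.Nodup ∧ 2 ≤ p.length ∧ p.getD 0 d = i ∧ p.getD (p.length - 1) d = j ∧
      (∀ m, m + 1 < p.length → G.adj (p.getD m d) (p.getD (m+1) d)) ∧
      (∀ m, m + 2 < p.length →
        G.trip C (p.getD m d) (p.getD (m+1) d) (p.getD (m+2) d)) := by
  unfold mConnecting isPath
  rw [auxChain'_iff_getD _ d, innerOK_iff_getD G C d]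
  constructor
  · rintro ⟨⟨hnd, hch⟩, hlen, hh, hl, hok⟩
    have hne : p ≠ [] := by intro h; rw [h] at hlen; simp at hlen
    rw [auxHead? p hne d] at hh
    rw [auxLast? p hne d] at hl
    exact ⟨hnd, hlen, by injection hh, by injection hl, hch, hok⟩
  · rintro ⟨hnd, hlen, hh, hl, hch, hok⟩
    have hne : p ≠ [] := by intro h; rw [h] at hlen; simp at hlen
    exact ⟨⟨hnd, hch⟩, hlen, by rw [auxHead? p hne d, hh], by rw [auxLast? p hne d, hl], hok⟩

theorem mconn_reverse {G : MixedGraph V} {C : Set V} {i j : V} {p : List V}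
    (h : G.mConnecting C i j p) : G.mConnecting C j i p.reverse := by
  rw [mconn_iff_getD G C i j p i] at h
  obtain ⟨hnd, hlen, hh, hl, hch, hok⟩ := h
  rw [mconn_iff_getD G C j i p.reverse i]
  have hlr : p.reverse.length = p.length := by simp
  refine ⟨List.nodup_reverse.2 hnd, by omega, ?_, ?_, ?_, ?_⟩
  · rw [auxGetD_reverse p (by omega) i]
    simpa using hl
  · rw [hlr, auxGetD_reverse p (by omega) i]
    simpa using hh
  · intro m hm
    rw [hlr] at hm
    rw [auxGetD_reverse p (by omega) i, auxGetD_reverse p (by omega) i]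
    have e1 : p.length - 1 - m = (p.length - 2 - m) + 1 := by omega
    have e2 : p.length - 1 - (m + 1) = p.length - 2 - m := by omega
    rw [e1, e2]
    exact adj_symm (hch _ (by omega))
  · intro m hm
    rw [hlr] at hm
    rw [auxGetD_reverse p (by omega) i, auxGetD_reverse p (by omega) i,
      auxGetD_reverse p (by omega) i]
    have e1 : p.length - 1 - m = (p.length - 3 - m) + 2 := by omega
    have e2 : p.length - 1 - (m + 1) = (p.length - 3 - m) + 1 := by omega
    have e3 : p.length - 1 - (m + 2) = p.length - 3 - m := by omega
    rw [e1, e2, e3]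
    exact trip_comm (hok _ (by omega))

theorem adj_of_collider {H : MixedGraph V} (hnc : ¬ ∃ i j k, H.unshieldedCollider i j k)
    {a b c : V} (hc : H.collider a b c) (hne : a ≠ c) : H.adj a c := by
  by_contra h
  exact hnc ⟨a, b, c, hc, hne, h⟩

theorem adj_toUG {H : MixedGraph V} {u v : V} : H.toUG.adj u v ↔ H.adj u v :=
  ⟨fun h => h.elim id (fun h => h.elim False.elim (fun h => h.elim False.elim False.elim)),
    fun h => Or.inl h⟩

theorem collider_toUG {H : MixedGraph V} {a b c : V} : ¬ H.toUG.collider a b c := by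
  rintro ⟨h, -⟩
  rcases h with h | h <;> exact h

theorem trip_toUG {H : MixedGraph V} {C : Set V} {a b c : V} :
    H.toUG.trip C a b c ↔ b ∉ C := by
  unfold trip
  constructor
  · intro h; exact h.2 collider_toUG
  · intro h; exact ⟨fun hc => absurd hc collider_toUG, fun _ => h⟩

/-- Shortcutting a shielded collider on a minimal `m`-connecting path:
if the shortcut is not `m`-connecting, one of the two boundary outcomes holds. -/
theorem shortcutLemma {H : MixedGraph V} (hA : H.isAncestral)
    {C : Set V} {i j d : V} {p : List V} (hp : H.mConnecting C i j p)
    {K : ℕ} (hK : K + 2 < p.length)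
    (hadj : H.adj (p.getD K d) (p.getD (K+2) d))
    (hcol : H.collider (p.getD K d) (p.getD (K+1) d) (p.getD (K+2) d))
    (hq : ¬ H.mConnecting C i j (p.eraseIdx (K+1))) :
    (1 ≤ K ∧ p.getD K d ∈ C ∧ H.headAt (p.getD (K-1) d) (p.getD K d) ∧
      H.arc (p.getD K d) (p.getD (K+1) d) ∧ H.arc (p.getD (K+2) d) (p.getD (K+1) d) ∧
      H.arrow (p.getD K d) (p.getD (K+2) d))
    ∨ (K + 3 < p.length ∧ p.getD (K+2) d ∈ C ∧ H.headAt (p.getD (K+3) d) (p.getD (K+2) d) ∧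
      H.arc (p.getD (K+2) d) (p.getD (K+1) d) ∧ H.arc (p.getD K d) (p.getD (K+1) d) ∧
      H.arrow (p.getD (K+2) d) (p.getD K d)) := by
  classical
  rw [mconn_iff_getD H C i j p d] at hp
  obtain ⟨hnd, hlen, hh, hl, hch, hok⟩ := hp
  rw [mconn_iff_getD H C i j _ d] at hq
  have hg : ∀ m, (p.eraseIdx (K+1)).getD m d
      = if m < K + 1 then p.getD m d else p.getD (m+1) d :=
    fun m => auxGetD_eraseIdx p (K+1) m d
  have hqlen : (p.eraseIdx (K+1)).length = p.length - 1 := by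
    rw [List.length_eraseIdx, if_pos (by omega)]
  have h1 : (p.eraseIdx (K+1)).Nodup := (p.eraseIdx_sublist (K+1)).nodup hnd
  have h3 : (p.eraseIdx (K+1)).getD 0 d = i := by
    rw [hg, if_pos (by omega)]; exact hh
  have h4 : (p.eraseIdx (K+1)).getD ((p.eraseIdx (K+1)).length - 1) d = j := by
    rw [hqlen, hg, if_neg (by omega)]
    have e : p.length - 1 - 1 + 1 = p.length - 1 := by omega
    rw [e]; exact hl
  have h5 : ∀ m, m + 1 < (p.eraseIdx (K+1)).length →
      H.adj ((p.eraseIdx (K+1)).getD m d) ((p.eraseIdx (K+1)).getD (m+1) d) := by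
    intro m hm
    rw [hqlen] at hm
    rw [hg, hg]
    rcases (by omega : m + 1 ≤ K ∨ m = K ∨ K + 1 ≤ m) with h | h | h
    · rw [if_pos (by omega), if_pos (by omega)]
      exact hch m (by omega)
    · subst h
      rw [if_pos (by omega), if_neg (by omega)]
      exact hadj
    · rw [if_neg (by omega), if_neg (by omega)]
      exact hch (m+1) (by omega)
  have hex : ∃ m, m + 2 < (p.eraseIdx (K+1)).length ∧
      ¬ H.trip C ((p.eraseIdx (K+1)).getD m d) ((p.eraseIdx (K+1)).getD (m+1) d)
        ((p.eraseIdx (K+1)).getD (m+2) d) := by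
    by_contra h
    push_neg at h
    exact hq ⟨h1, by omega, h3, h4, h5, fun m hm => h m hm⟩
  obtain ⟨m, hm, hmt⟩ := hex
  rw [hqlen] at hm
  rw [hg, hg, hg] at hmt
  rcases (by omega : m + 2 ≤ K ∨ (1 ≤ K ∧ m = K - 1) ∨ m = K ∨ K + 1 ≤ m)
    with h | ⟨hK1, h⟩ | h | h
  · rw [if_pos (by omega), if_pos (by omega), if_pos (by omega)] at hmt
    exact absurd (hok m (by omega)) hmt
  · subst h
    rw [if_pos (by omega), if_pos (by omega), if_neg (by omega)] at hmt
    have e1 : K - 1 + 1 = K := by omega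
    have e2 : K - 1 + 2 = K + 1 := by omega
    rw [e1, e2] at hmt
    have hold : H.trip C (p.getD (K-1) d) (p.getD K d) (p.getD (K+1) d) := by
      have := hok (K-1) (by omega)
      rwa [e1, e2] at this
    have hb : H.AnC C (p.getD (K+1) d) := (hok K (by omega)).1 hcol
    obtain ⟨haC, hwa, hab, hcb, hac⟩ := failNode hA hold hcol hb hadj hmt
    exact Or.inl ⟨hK1, haC, hwa, hab, hcb, hac⟩
  · rw [h] at hmt
    rw [if_pos (by omega), if_neg (by omega), if_neg (by omega)] at hmt
    have hK3 : K + 3 < p.length := by omega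
    have hold : H.trip C (p.getD (K+3) d) (p.getD (K+2) d) (p.getD (K+1) d) :=
      trip_comm (hok (K+1) (by omega))
    have hcol' : H.collider (p.getD (K+2) d) (p.getD (K+1) d) (p.getD K d) :=
      ⟨hcol.2, hcol.1⟩
    have hb : H.AnC C (p.getD (K+1) d) := (hok K (by omega)).1 hcol
    have hnew : ¬ H.trip C (p.getD (K+3) d) (p.getD (K+2) d) (p.getD K d) :=
      fun h => hmt (trip_comm h)
    obtain ⟨haC, hwa, hab, hcb, hac⟩ := failNode hA hold hcol' hb (adj_symm hadj) hnew
    exact Or.inr ⟨hK3, haC, hwa, hab, hcb, hac⟩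
  · rw [if_neg (by omega), if_neg (by omega), if_neg (by omega)] at hmt
    exact absurd (hok (m+1) (by omega)) hmt

end MixedGraph

open MixedGraph in
/-- A maximal ancestral graph with no unshielded collider V-configuration is
Markov equivalent to the undirected graph obtained by removing all arrowheads. -/
theorem mag_no_unshielded_collider_equiv_toUG {V : Type*} [Fintype V]
    (H : MixedGraph V) (hH : H.isMAG)
    (hnc : ¬ ∃ i j k, H.unshieldedCollider i j k) :
    H.markovEquiv H.toUG := by
  classical
  obtain ⟨hA, hmax⟩ := hH
  intro A B C _ _ _
  -- Easy direction: a UG-connecting path yields an H-connecting path.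
  have key2 : (∃ x y q, x ∈ A ∧ y ∈ B ∧ H.toUG.mConnecting C x y q) →
      ∃ x y q, x ∈ A ∧ y ∈ B ∧ H.mConnecting C x y q := by
    intro hex
    have hP : ∃ n, ∃ q x y, x ∈ A ∧ y ∈ B ∧ H.toUG.mConnecting C x y q ∧ q.length = n := by
      obtain ⟨x, y, q, hx, hy, hq⟩ := hex
      exact ⟨q.length, q, x, y, hx, hy, hq, rfl⟩
    obtain ⟨p, x, y, hx, hy, hq, hplen⟩ := Nat.find_spec hP
    have hmin : ∀ (q' : List V) x' y', x' ∈ A → y' ∈ B →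
        H.toUG.mConnecting C x' y' q' → p.length ≤ q'.length := by
      intro q' x' y' hx' hy' h
      rw [hplen]
      exact Nat.find_min' hP ⟨q', x', y', hx', hy', h, rfl⟩
    refine ⟨x, y, p, hx, hy, ?_⟩
    rw [mconn_iff_getD H.toUG C x y p x] at hq
    obtain ⟨hnd, hlen, hh, hl, hch, hok⟩ := hq
    rw [mconn_iff_getD H C x y p x]
    refine ⟨hnd, hlen, hh, hl, fun m hm => adj_toUG.1 (hch m hm), ?_⟩
    intro m hm
    by_cases hcol : H.collider (p.getD m x) (p.getD (m+1) x) (p.getD (m+2) x)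
    · exfalso
      have hne : p.getD m x ≠ p.getD (m+2) x := fun h => by
        have := auxNodup_inj hnd x (by omega) (by omega) h; omega
      have hadj := adj_of_collider hnc hcol hne
      have hg : ∀ m', (p.eraseIdx (m+1)).getD m' x
          = if m' < m+1 then p.getD m' x else p.getD (m'+1) x :=
        fun m' => auxGetD_eraseIdx p (m+1) m' x
      have hqlen : (p.eraseIdx (m+1)).length = p.length - 1 := by
        rw [List.length_eraseIdx, if_pos (by omega)]
      have hmc : H.toUG.mConnecting C x y (p.eraseIdx (m+1)) := by
        rw [mconn_iff_getD H.toUG C x y _ x, hqlen]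
        refine ⟨(p.eraseIdx_sublist (m+1)).nodup hnd, by omega, ?_, ?_, ?_, ?_⟩
        · rw [hg, if_pos (by omega)]; exact hh
        · rw [hg, if_neg (by omega)]
          have e : p.length - 1 - 1 + 1 = p.length - 1 := by omega
          rw [e]; exact hl
        · intro m' hm'
          rw [hg, hg]
          rcases (by omega : m' + 1 ≤ m ∨ m' = m ∨ m + 1 ≤ m') with h | h | h
          · rw [if_pos (by omega), if_pos (by omega)]; exact hch m' (by omega)
          · rw [h, if_pos (by omega), if_neg (by omega)]; exact adj_toUG.2 hadj
          · rw [if_neg (by omega), if_neg (by omega)]; exact hch (m'+1) (by omega)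
        · intro m' hm'
          rw [hg, hg, hg, trip_toUG]
          by_cases h : m' + 1 < m + 1
          · rw [if_pos h]
            exact trip_toUG.1 (hok m' (by omega))
          · rw [if_neg h]
            exact trip_toUG.1 (hok (m'+1) (by omega))
      have := hmin _ _ _ hx hy hmc
      rw [hqlen] at this
      omega
    · exact ⟨fun h => absurd h hcol, fun _ => trip_toUG.1 (hok m hm)⟩
  -- Hard direction: an H-connecting path yields a UG-connecting path.
  have key1 : (∃ x y q, ((x ∈ A ∧ y ∈ B) ∨ (x ∈ B ∧ y ∈ A)) ∧ H.mConnecting C x y q) →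
      ∃ x y q, x ∈ A ∧ y ∈ B ∧ H.toUG.mConnecting C x y q := by
    intro hex
    have hP : ∃ n, ∃ q x y, ((x ∈ A ∧ y ∈ B) ∨ (x ∈ B ∧ y ∈ A)) ∧
        H.mConnecting C x y q ∧ q.length = n := by
      obtain ⟨x, y, q, hxy, hq⟩ := hex
      exact ⟨q.length, q, x, y, hxy, hq, rfl⟩
    obtain ⟨p, x, y, hxy, hp, hplen⟩ := Nat.find_spec hP
    have hmin : ∀ (q : List V) x' y', ((x' ∈ A ∧ y' ∈ B) ∨ (x' ∈ B ∧ y' ∈ A)) →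
        H.mConnecting C x' y' q → p.length ≤ q.length := by
      intro q x' y' hxy' h
      rw [hplen]
      exact Nat.find_min' hP ⟨q, x', y', hxy', h, rfl⟩
    -- The descent lemma: no "bad configuration" at any position of a minimal path.
    have descent : ∀ (r : List V) (x' y' : V),
        ((x' ∈ A ∧ y' ∈ B) ∨ (x' ∈ B ∧ y' ∈ A)) → H.mConnecting C x' y' r →
        r.length = p.length →
        ∀ k, 1 ≤ k → k + 2 < r.length →
        ¬ (r.getD k x' ∈ C ∧ H.headAt (r.getD (k-1) x') (r.getD k x') ∧
           H.arc (r.getD k x') (r.getD (k+1) x') ∧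
           H.arc (r.getD (k+2) x') (r.getD (k+1) x') ∧
           H.arrow (r.getD k x') (r.getD (k+2) x')) := by
      intro r x' y' hxy' hr hrlen k
      induction k using Nat.strong_induction_on with
      | _ k IH =>
      intro hk1 hk2 hS
      obtain ⟨k', rfl⟩ : ∃ k', k = k' + 1 := ⟨k - 1, by omega⟩
      obtain ⟨hC, hwa, hab, hcb, hac⟩ := hS
      rw [Nat.add_sub_cancel] at hwa
      have hrm := (mconn_iff_getD H C x' y' r x').1 hr
      obtain ⟨hnd, hlen, hh, hl, hch, hok⟩ := hrm
      have hab2 : H.arc (r.getD (k'+1) x') (r.getD (k'+2) x') := hab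
      have hcb2 : H.arc (r.getD (k'+3) x') (r.getD (k'+2) x') := hcb
      have hac2 : H.arrow (r.getD (k'+1) x') (r.getD (k'+3) x') := hac
      have hcol : H.collider (r.getD k' x') (r.getD (k'+1) x') (r.getD (k'+2) x') :=
        ⟨hwa, Or.inr (H.arc_symm _ _ hab2)⟩
      have hne02 : r.getD k' x' ≠ r.getD (k'+2) x' := fun h => by
        have := auxNodup_inj hnd x' (by omega) (by omega) h; omega
      have hadj : H.adj (r.getD k' x') (r.getD (k'+2) x') := adj_of_collider hnc hcol hne02
      have hq : ¬ H.mConnecting C x' y' (r.eraseIdx (k'+1)) := by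
        intro hmc
        have := hmin _ _ _ hxy' hmc
        rw [List.length_eraseIdx, if_pos (by omega)] at this
        omega
      rcases shortcutLemma hA hr (by omega) hadj hcol hq with
        ⟨hk'1, hC', hwa', hab', hcb', hac'⟩ | ⟨hK3, hbC, hcb3, hba', hwa2, hbw⟩
      · exact IH k' (by omega) hk'1 (by omega) ⟨hC', hwa', hab', hcb', hac'⟩
      · -- deadlock configuration on w = r[k'], a = r[k'+1], b = r[k'+2], c = r[k'+3]
        by_cases hwc : H.adj (r.getD k' x') (r.getD (k'+3) x')
        · rcases hwc with hline | harr | harr | harc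
          · exact (hA.2 _ _ _ hline) (Or.inr (H.arc_symm _ _ hwa2))
          · exact not_head_of_anc hA
              ((Relation.ReflTransGen.single hbw).trans (Relation.ReflTransGen.single harr))
              (Or.inr hcb2)
          · exact not_head_of_anc hA
              ((Relation.ReflTransGen.single hac2).trans (Relation.ReflTransGen.single harr))
              (Or.inr hwa2)
          · -- arc w c : shortcut both a and b, contradicting minimality
            have hg2 : ∀ m', ((r.eraseIdx (k'+1)).eraseIdx (k'+1)).getD m' x'
                = if m' < k'+1 then r.getD m' x' else r.getD (m'+2) x' := by
              intro m'
              rw [auxGetD_eraseIdx]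
              by_cases hlt : m' < k' + 1
              · rw [if_pos hlt, auxGetD_eraseIdx, if_pos hlt, if_pos hlt]
              · rw [if_neg hlt, auxGetD_eraseIdx, if_neg (by omega), if_neg hlt]
            have l1 : (r.eraseIdx (k'+1)).length = r.length - 1 := by
              rw [List.length_eraseIdx, if_pos (by omega)]
            have hq2len : ((r.eraseIdx (k'+1)).eraseIdx (k'+1)).length = r.length - 2 := by
              rw [List.length_eraseIdx, l1, if_pos (by omega)]; omega
            have hmc2 : H.mConnecting C x' y' ((r.eraseIdx (k'+1)).eraseIdx (k'+1)) := by
              rw [mconn_iff_getD H C x' y' _ x', hq2len]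
              refine ⟨((r.eraseIdx (k'+1)).eraseIdx_sublist (k'+1)).nodup
                ((r.eraseIdx_sublist (k'+1)).nodup hnd), by omega, ?_, ?_, ?_, ?_⟩
              · rw [hg2, if_pos (by omega)]; exact hh
              · rw [hg2, if_neg (by omega)]
                have e : r.length - 2 - 1 + 2 = r.length - 1 := by omega
                rw [e]; exact hl
              · intro m' hm'
                rw [hg2, hg2]
                rcases (by omega : m' + 1 ≤ k' ∨ m' = k' ∨ k' + 1 ≤ m') with h | h | h
                · rw [if_pos (by omega), if_pos (by omega)]; exact hch m' (by omega)
                · rw [h, if_pos (by omega), if_neg (by omega)]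
                  exact Or.inr (Or.inr (Or.inr harc))
                · rw [if_neg (by omega), if_neg (by omega)]; exact hch (m'+2) (by omega)
              · intro m' hm'
                rw [hg2, hg2, hg2]
                rcases (by omega : m' + 2 ≤ k' ∨ (1 ≤ k' ∧ m' + 1 = k') ∨ m' = k' ∨ k' + 1 ≤ m')
                  with h | ⟨h1, h⟩ | h | h
                · rw [if_pos (by omega), if_pos (by omega), if_pos (by omega)]
                  exact hok m' (by omega)
                · have hk : k' = m' + 1 := by omega
                  subst hk
                  rw [if_pos (by omega), if_pos (by omega), if_neg (by omega)]
                  refine trip_congr ?_ (hok m' (by omega))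
                  constructor
                  · intro hco; exact ⟨hco.1, Or.inr (H.arc_symm _ _ harc)⟩
                  · intro hco; exact ⟨hco.1, Or.inr (H.arc_symm _ _ hwa2)⟩
                · rw [h]
                  rw [if_pos (by omega), if_neg (by omega), if_neg (by omega)]
                  refine trip_congr ?_ (hok (k'+2) (by omega))
                  constructor
                  · intro hco; exact ⟨Or.inr harc, hco.2⟩
                  · intro hco; exact ⟨Or.inr (H.arc_symm _ _ hcb2), hco.2⟩
                · rw [if_neg (by omega), if_neg (by omega), if_neg (by omega)]
                  exact hok (m'+2) (by omega)
            have := hmin _ _ _ hxy' hmc2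
            rw [hq2len] at this
            omega
        · -- w, c non-adjacent: contradiction with maximality
          have hnewc : r.getD k' x' ≠ r.getD (k'+3) x' := fun h => by
            have := auxNodup_inj hnd x' (by omega) (by omega) h; omega
          obtain ⟨C', hwC', hcC', hsep⟩ := hmax _ _ hnewc hwc
          have d01 : r.getD k' x' ≠ r.getD (k'+1) x' := fun h => by
            have := auxNodup_inj hnd x' (by omega) (by omega) h; omega
          have d02 : r.getD k' x' ≠ r.getD (k'+2) x' := hne02
          have d12 : r.getD (k'+1) x' ≠ r.getD (k'+2) x' := fun h => by
            have := auxNodup_inj hnd x' (by omega) (by omega) h; omega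
          have d13 : r.getD (k'+1) x' ≠ r.getD (k'+3) x' := fun h => by
            have := auxNodup_inj hnd x' (by omega) (by omega) h; omega
          have d23 : r.getD (k'+2) x' ≠ r.getD (k'+3) x' := fun h => by
            have := auxNodup_inj hnd x' (by omega) (by omega) h; omega
          by_cases haC' : r.getD (k'+1) x' ∈ C'
          · by_cases hbC' : r.getD (k'+2) x' ∈ C'
            · refine hsep ⟨_, _, [r.getD k' x', r.getD (k'+1) x', r.getD (k'+2) x',
                r.getD (k'+3) x'], rfl, rfl, ⟨?_, ?_⟩, by simp, rfl, by simp, ?_, ?_, trivial⟩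
              · simp
                exact ⟨⟨by simpa using d01, by simpa using d02, by simpa using hnewc⟩,
                  ⟨by simpa using d12, by simpa using d13⟩, by simpa using d23⟩
              · refine List.IsChain.cons_cons ?_ (List.IsChain.cons_cons ?_ (List.isChain_pair.2 ?_))
                · exact Or.inr (Or.inr (Or.inr hwa2))
                · exact Or.inr (Or.inr (Or.inr hab2))
                · exact Or.inr (Or.inr (Or.inr (H.arc_symm _ _ hcb2)))
              · exact ⟨fun _ => Or.inl haC',
                  fun hn => absurd ⟨Or.inr hwa2, Or.inr (H.arc_symm _ _ hab2)⟩ hn⟩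
              · exact ⟨fun _ => Or.inl hbC',
                  fun hn => absurd ⟨Or.inr hab2, Or.inr hcb2⟩ hn⟩
            · refine hsep ⟨_, _, [r.getD k' x', r.getD (k'+2) x', r.getD (k'+3) x'],
                rfl, rfl, ⟨?_, ?_⟩, by simp, rfl, by simp, ?_, trivial⟩
              · simp
                exact ⟨⟨by simpa using d02, by simpa using hnewc⟩, by simpa using d23⟩
              · refine List.IsChain.cons_cons ?_ (List.isChain_pair.2 ?_)
                · exact Or.inr (Or.inr (Or.inl hbw))
                · exact Or.inr (Or.inr (Or.inr (H.arc_symm _ _ hcb2)))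
              · refine ⟨fun hco => absurd hco.1 ?_, fun _ => hbC'⟩
                exact not_head_of_anc hA (Relation.ReflTransGen.single hbw)
          · refine hsep ⟨_, _, [r.getD k' x', r.getD (k'+1) x', r.getD (k'+3) x'],
              rfl, rfl, ⟨?_, ?_⟩, by simp, rfl, by simp, ?_, trivial⟩
            · simp
              exact ⟨⟨by simpa using d01, by simpa using hnewc⟩, by simpa using d13⟩
            · refine List.IsChain.cons_cons ?_ (List.isChain_pair.2 ?_)
              · exact Or.inr (Or.inr (Or.inr hwa2))
              · exact Or.inr (Or.inl hac2)
            · refine ⟨fun hco => absurd hco.2 ?_, fun _ => haC'⟩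
              exact not_head_of_anc hA (Relation.ReflTransGen.single hac2)
    -- the minimal path has no inner node in C
    have hpm := (mconn_iff_getD H C x y p x).1 hp
    obtain ⟨hnd, hlen, hh, hl, hch, hok⟩ := hpm
    have inner : ∀ m, 1 ≤ m → m + 1 < p.length → p.getD m x ∉ C := by
      intro m hm1 hm2 hmC
      obtain ⟨m', rfl⟩ : ∃ m', m = m' + 1 := ⟨m - 1, by omega⟩
      have hcolm : H.collider (p.getD m' x) (p.getD (m'+1) x) (p.getD (m'+2) x) := by
        by_contra h
        exact (hok m' (by omega)).2 h hmC
      have hne : p.getD m' x ≠ p.getD (m'+2) x := fun h => by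
        have := auxNodup_inj hnd x (by omega) (by omega) h; omega
      have hadj := adj_of_collider hnc hcolm hne
      have hq : ¬ H.mConnecting C x y (p.eraseIdx (m'+1)) := by
        intro hmc
        have := hmin _ _ _ hxy hmc
        rw [List.length_eraseIdx, if_pos (by omega)] at this
        omega
      rcases shortcutLemma hA hp (by omega) hadj hcolm hq with
        ⟨hk1, hC', hwa', hab', hcb', hac'⟩ | ⟨hK3, hbC, hcb3, hba', hwa2, hbw⟩
      · exact descent p x y hxy hp rfl m' hk1 (by omega) ⟨hC', hwa', hab', hcb', hac'⟩
      · have hxy' : ((y ∈ A ∧ x ∈ B) ∨ (y ∈ B ∧ x ∈ A)) := by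
          rcases hxy with ⟨h1, h2⟩ | ⟨h1, h2⟩
          · exact Or.inr ⟨h2, h1⟩
          · exact Or.inl ⟨h2, h1⟩
        have grw : ∀ t s, t < p.length → p.length - 1 - t = s →
            p.reverse.getD t y = p.getD s x := by
          intro t s ht hs
          rw [auxGetD_reverse p ht y, hs]
          exact auxGetD_indep p (by omega) y x
        refine descent p.reverse y x hxy' (mconn_reverse hp) (by simp)
          (p.length - m' - 3) (by omega) (by simp only [List.length_reverse]; omega)
          ⟨?_, ?_, ?_, ?_, ?_⟩
        · rw [grw _ (m'+2) (by omega) (by omega)]; exact hbC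
        · rw [grw _ (m'+3) (by omega) (by omega), grw _ (m'+2) (by omega) (by omega)]
          exact hcb3
        · rw [grw _ (m'+2) (by omega) (by omega), grw _ (m'+1) (by omega) (by omega)]
          exact hba'
        · rw [grw _ m' (by omega) (by omega), grw _ (m'+1) (by omega) (by omega)]
          exact hwa2
        · rw [grw _ (m'+2) (by omega) (by omega), grw _ m' (by omega) (by omega)]
          exact hbw
    have hUG : H.toUG.mConnecting C x y p := by
      rw [mconn_iff_getD H.toUG C x y p x]
      refine ⟨hnd, hlen, hh, hl, fun m hm => adj_toUG.2 (hch m hm), ?_⟩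
      intro m hm
      rw [trip_toUG]
      exact inner (m+1) (by omega) (by omega)
    rcases hxy with ⟨hxA, hyB⟩ | ⟨hxB, hyA⟩
    · exact ⟨x, y, p, hxA, hyB, hUG⟩
    · exact ⟨y, x, p.reverse, hyA, hxB, mconn_reverse hUG⟩
  constructor
  · intro hs hcon
    rcases hcon with ⟨i, j, q, hi, hj, hq⟩
    obtain ⟨x', y', q', hx', hy', hq'⟩ := key2 ⟨i, j, q, hi, hj, hq⟩
    exact hs ⟨x', y', q', hx', hy', hq'⟩
  · intro hs hcon
    rcases hcon with ⟨i, j, q, hi, hj, hq⟩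
    obtain ⟨x', y', q', hx', hy', hq'⟩ := key1 ⟨i, j, q, Or.inl ⟨hi, hj⟩, hq⟩
    exact hs ⟨x', y', q', hx', hy', hq'⟩
end

section
/- A maximal ancestral graph H is Markov equivalent to some undirected graph if and only if H contains no unshielded collider V-configuration. -/
namespace MixedGraph

variable {V : Type*} {G H : MixedGraph V}

lemma adj_symm_s6 (h : G.adj i j) : G.adj j i := by
  rcases h with h | h | h | h
  · exact Or.inl (G.line_symm _ _ h)
  · exact Or.inr (Or.inr (Or.inl h))
  · exact Or.inr (Or.inl h)
  · exact Or.inr (Or.inr (Or.inr (G.arc_symm _ _ h)))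

lemma adj_irrefl (G : MixedGraph V) (i : V) : ¬ G.adj i i := by
  rintro (h | h | h | h)
  exacts [G.line_irrefl _ h, G.arrow_irrefl _ h, G.arrow_irrefl _ h, G.arc_irrefl _ h]

lemma headAt.ne (h : G.headAt i j) : i ≠ j := by
  rintro rfl
  rcases h with h | h
  exacts [G.arrow_irrefl _ h, G.arc_irrefl _ h]

lemma headAt.adj (h : G.headAt i j) : G.adj i j := by
  rcases h with h | h
  · exact Or.inr (Or.inl h)
  · exact Or.inr (Or.inr (Or.inr h))

lemma headAt.adj' (h : G.headAt i j) : G.adj j i := adj_symm_s6 h.adj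

lemma anc_single (h : G.arrow i j) : G.anc i j := Relation.ReflTransGen.single h

lemma arrow_no_head (hanc : G.isAncestral) (h : G.arrow i j) : ¬ G.headAt j i := by
  rintro (h2 | h2)
  · exact hanc.1 i j (Or.inl h2) (anc_single h)
  · exact hanc.1 i j (Or.inr h2) (anc_single h)

lemma arc_no_arrow (hanc : G.isAncestral) (h : G.arc i j) : ¬ G.arrow i j := by
  intro h2
  exact hanc.1 i j (Or.inr (G.arc_symm _ _ h)) (anc_single h2)

lemma two_heads_arc (hanc : G.isAncestral) (h1 : G.headAt i j) (h2 : G.headAt j i) :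
    G.arc i j := by
  rcases h1 with h1 | h1
  · exact absurd h2 (arrow_no_head hanc h1)
  · exact h1

/-- If `i` and `j` are adjacent but there is no head at `j` and no line,
then there is an arrow from `j` to `i`. -/
lemma arrow_of_adj_s6 (hanc : G.isAncestral) (hadj : G.adj i j) (hnh : ¬ G.headAt i j)
    (hline : ¬ G.line i j) : G.arrow j i := by
  rcases hadj with h | h | h | h
  · exact absurd h hline
  · exact absurd (Or.inl h) hnh
  · exact h
  · exact absurd (Or.inr h) hnh

/-- tripleOK : the inner-node condition for a single consecutive triple. -/
def tripleOK (G : MixedGraph V) (C : Set V) (a b c : V) : Prop :=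
  (G.collider a b c → b ∈ C ∨ ∃ x ∈ C, G.anc b x) ∧ (¬ G.collider a b c → b ∉ C)

lemma collider_symm (h : G.collider a b c) : G.collider c b a := ⟨h.2, h.1⟩

lemma tripleOK_symm (h : G.tripleOK C a b c) : G.tripleOK C c b a :=
  ⟨fun hc => h.1 (collider_symm hc), fun hc => h.2 (fun hc2 => hc (collider_symm hc2))⟩

lemma innerOK_iff_triples (G : MixedGraph V) (C : Set V) :
    ∀ p : List V, G.innerOK C p ↔
      ∀ n a b c, p[n]? = some a → p[n+1]? = some b → p[n+2]? = some c →
        G.tripleOK C a b c := by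
  intro p
  induction p with
  | nil => simp [innerOK]
  | cons x t ih =>
    match t, ih with
    | [], _ => simp [innerOK]
    | [y], _ => constructor
                · intro _ n a b c h1 h2 h3
                  rcases n with _ | n
                  · simp at h3
                  · rcases n with _ | n <;> simp at h2 h3
                · intro _; simp [innerOK]
    | y :: z :: t2, ih =>
      show (G.tripleOK C x y z ∧ G.innerOK C (y :: z :: t2)) ↔ _
      rw [ih]
      constructor
      · rintro ⟨h0, ht⟩ n a b c h1 h2 h3
        rcases n with _ | n
        · simp only [List.getElem?_cons_zero, Option.some.injEq] at h1
          simp only [List.getElem?_cons_succ, List.getElem?_cons_zero, Option.some.injEq] at h2 h3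
          subst h1; subst h2; subst h3; exact h0
        · exact ht n a b c (by simpa using h1) (by simpa using h2) (by simpa using h3)
      · intro h
        constructor
        · exact h 0 x y z rfl rfl (by simp)
        · intro n a b c h1 h2 h3
          exact h (n+1) a b c (by simpa using h1) (by simpa using h2) (by simpa using h3)

lemma mConnecting.innerOK' (h : G.mConnecting C i j p) :
    ∀ n a b c, p[n]? = some a → p[n+1]? = some b → p[n+2]? = some c →
      G.tripleOK C a b c := (innerOK_iff_triples G C p).mp h.2.2.2.2

end MixedGraph
namespace MixedGraph

variable {V : Type*} {G : MixedGraph V} {C : Set V}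

/-- Generic path-splice lemma: removing the middle segment `m` between `a` and `w`
preserves `m`-connection, provided `a` and `w` are adjacent and the two new
triples are fine. -/
lemma splice {i j a w : V} {l m r : List V}
    (hconn : G.mConnecting C i j (l ++ a :: (m ++ w :: r)))
    (haw : G.adj a w)
    (Ha : ∀ z, l.getLast? = some z → G.tripleOK C z a w)
    (Hw : ∀ y, r.head? = some y → G.tripleOK C a w y) :
    G.mConnecting C i j (l ++ a :: w :: r) := by
  set p := l ++ a :: (m ++ w :: r) with hp
  set q := l ++ a :: w :: r with hq
  set L := l.length with hL
  -- getElem? helpers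
  have hpl : ∀ n, n < L → p[n]? = l[n]? := fun n h => List.getElem?_append_left h
  have hql : ∀ n, n < L → q[n]? = l[n]? := fun n h => List.getElem?_append_left h
  have hpa : p[L]? = some a := by
    rw [hp, List.getElem?_append_right (le_refl L)]; simp [hL]
  have hqa : q[L]? = some a := by
    rw [hq, List.getElem?_append_right (le_refl L)]; simp [hL]
  have hpm : ∀ t, p[L+1+t]? = (m ++ w :: r)[t]? := by
    intro t
    rw [hp, List.getElem?_append_right (show L ≤ L+1+t by omega)]
    have h1 : L + 1 + t - L = t + 1 := by omega
    rw [h1]; simp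
  have hpwr : ∀ t, p[L+1+m.length+t]? = (w :: r)[t]? := by
    intro t
    have h1 : L + 1 + m.length + t = L + 1 + (m.length + t) := by omega
    rw [h1, hpm (m.length + t), List.getElem?_append_right (Nat.le_add_right _ _)]
    congr 1; omega
  have hqwr : ∀ t, q[L+1+t]? = (w :: r)[t]? := by
    intro t
    rw [hq, List.getElem?_append_right (show L ≤ L+1+t by omega)]
    have h1 : L + 1 + t - L = t + 1 := by omega
    rw [h1]; simp
  obtain ⟨⟨hnd, hch⟩, hlen, hhead, hlast, hinner⟩ := hconn
  refine ⟨⟨?_, ?_⟩, ?_, ?_, ?_, ?_⟩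
  · -- Nodup
    refine hnd.sublist ?_
    exact ((List.sublist_append_right m (w :: r)).cons₂ a).append_left l
  · -- Chain'
    rw [hp, List.Chain', List.isChain_append] at hch
    obtain ⟨h1, h2, h3⟩ := hch
    rw [hq, List.Chain', List.isChain_append]
    refine ⟨h1, ?_, ?_⟩
    · rw [List.isChain_cons_cons]
      refine ⟨haw, ?_⟩
      rw [List.isChain_cons] at h2
      have h4 := h2.2
      rw [List.isChain_append] at h4
      exact h4.2.1
    · intro x hx y hy
      simp only [List.head?_cons, Option.mem_def, Option.some.injEq] at hy
      subst hy
      exact h3 x hx a (by simp)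
  · -- length
    rw [hq]; simp; omega
  · -- head?
    rw [hp] at hhead
    rw [hq]
    cases l with
    | nil => simpa using hhead
    | cons x l' => simpa using hhead
  · -- getLast?
    have e1 : p = (l ++ a :: m) ++ (w :: r) := by rw [hp]; simp
    have e2 : q = (l ++ [a]) ++ (w :: r) := by rw [hq]; simp
    rw [e1, List.getLast?_append_of_ne_nil _ (by simp)] at hlast
    rw [e2, List.getLast?_append_of_ne_nil _ (by simp)]
    exact hlast
  · -- innerOK
    rw [innerOK_iff_triples] at hinner ⊢
    intro n x y z h1 h2 h3
    rcases lt_trichotomy (n+2) (L+1) with hcase | hcase | hcase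
    · -- whole triple within l ++ [a] : indices ≤ L, same in p
      have e : ∀ k, k ≤ L → q[k]? = p[k]? := by
        intro k hk
        rcases lt_or_eq_of_le hk with hk | hk
        · rw [hql k hk, hpl k hk]
        · subst hk; rw [hqa, hpa]
      exact hinner n x y z
        ((e n (by omega)).symm.trans h1) ((e (n+1) (by omega)).symm.trans h2)
        ((e (n+2) (by omega)).symm.trans h3)
    · -- center is a : n+1 = L
      have hnL : n + 1 = L := by omega
      have hy : y = a := by
        rw [← hnL] at hqa; rw [h2] at hqa; exact (Option.some_inj.mp hqa)
      have hz : z = w := by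
        have h := hqwr 0
        rw [show L + 1 + 0 = n + 2 by omega, h3] at h
        simp at h; exact h
      have hx : l.getLast? = some x := by
        have e := hql n (by omega)
        rw [e] at h1
        rw [List.getLast?_eq_getElem?, show l.length - 1 = n by omega]
        exact h1
      subst hy; subst hz
      exact Ha x hx
    · rcases Nat.lt_or_ge n (L+1) with hn | hn
      · -- n = L : center is w
        have hnL : n = L := by omega
        have hx : x = a := by
          rw [hnL] at h1
          exact Option.some_inj.mp (h1.symm.trans hqa)
        have hy : y = w := by
          have h := hqwr 0
          rw [show L + 1 + 0 = n + 1 by omega, h2] at h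
          simp at h; exact h
        have hz : r.head? = some z := by
          have h := hqwr 1
          rw [show L + 1 + 1 = n + 2 by omega, h3] at h
          rw [List.head?_eq_getElem?]
          simp at h
          exact h.symm
        subst hx; subst hy
        exact Hw z hz
      · -- n ≥ L+1 : triple within (w :: r), matches p at n + m.length
        set t := n - (L+1) with htdef
        have e0 : q[n]? = (w :: r)[t]? := by rw [show n = L+1+t by omega]; exact hqwr t
        have e1 : q[n+1]? = (w :: r)[t+1]? := by rw [show n+1 = L+1+(t+1) by omega]; exact hqwr (t+1)
        have e2 : q[n+2]? = (w :: r)[t+2]? := by rw [show n+2 = L+1+(t+2) by omega]; exact hqwr (t+2)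
        set N := L + 1 + m.length + t with hN
        have f0 : p[N]? = (w :: r)[t]? := hpwr t
        have f1 : p[N+1]? = (w :: r)[t+1]? := by
          rw [show N+1 = L+1+m.length+(t+1) by omega]; exact hpwr (t+1)
        have f2 : p[N+2]? = (w :: r)[t+2]? := by
          rw [show N+2 = L+1+m.length+(t+2) by omega]; exact hpwr (t+2)
        exact hinner N x y z (f0.trans (e0.symm.trans h1)) (f1.trans (e1.symm.trans h2))
          (f2.trans (e2.symm.trans h3))
end MixedGraph
namespace MixedGraph

variable {V : Type*} {G H : MixedGraph V} {C : Set V}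

lemma mConnecting.reverse {i j : V} {p : List V} (h : G.mConnecting C i j p) :
    G.mConnecting C j i p.reverse := by
  obtain ⟨⟨hnd, hch⟩, hlen, hhead, hlast, hinner⟩ := h
  refine ⟨⟨by simpa using hnd, ?_⟩, by simpa using hlen, by simpa using hlast,
    by simpa using hhead, ?_⟩
  · rw [List.Chain', List.isChain_reverse]
    exact hch.imp (fun a b hab => adj_symm_s6 hab)
  · rw [innerOK_iff_triples] at hinner ⊢
    intro n x y z h1 h2 h3
    have hb : n + 2 < p.length := by
      have := (List.getElem?_eq_some_iff.mp h3).1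
      simpa using this
    set N := p.length - 1 - (n + 2) with hN
    have e1 : p.reverse[n]? = p[N+2]? := by
      rw [List.getElem?_reverse (by omega)]; congr 1; omega
    have e2 : p.reverse[n+1]? = p[N+1]? := by
      rw [List.getElem?_reverse (by omega)]; congr 1; omega
    have e3 : p.reverse[n+2]? = p[N]? := by
      rw [List.getElem?_reverse (by omega)]
    exact tripleOK_symm (hinner N z y x (e3 ▸ h3) (e2 ▸ h2) (e1 ▸ h1))

/-- The skeleton of a mixed graph, as an undirected graph. -/
def skel (H : MixedGraph V) : MixedGraph V where
  line := H.adj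
  arrow := fun _ _ => False
  arc := fun _ _ => False
  line_symm := fun _ _ => adj_symm_s6
  arc_symm := fun _ _ h => h
  line_irrefl := fun i => H.adj_irrefl i
  arrow_irrefl := fun _ h => h
  arc_irrefl := fun _ h => h

lemma skel_isUG (H : MixedGraph V) : (skel H).isUG := ⟨fun _ _ h => h, fun _ _ h => h⟩

lemma skel_adj {i j : V} : (skel H).adj i j ↔ H.adj i j := by
  unfold adj skel
  simp only [or_false]
  exact Iff.rfl

lemma isUG_no_collider {a b c : V} (hU : G.isUG) : ¬ G.collider a b c := by
  rintro ⟨(h | h), _⟩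
  · exact hU.1 _ _ h
  · exact hU.2 _ _ h

/-- split a list ending outside C into its maximal C-prefix and the rest -/
lemma split_run {y : V} (hyC : y ∈ C) :
    ∀ t' : List V, (∀ z, (y :: t').getLast? = some z → z ∉ C) →
      ∃ run w r, y :: t' = run ++ w :: r ∧ run ≠ [] ∧ (∀ u ∈ run, u ∈ C) ∧ w ∉ C := by
  intro t'
  induction t' generalizing y with
  | nil =>
    intro hlast
    exact absurd hyC (hlast y rfl)
  | cons y₂ t₂ ih =>
    intro hlast
    by_cases hy₂ : y₂ ∈ C
    · obtain ⟨run, w, r, heq, hne, hrun, hw⟩ := ih hy₂ (fun z hz => hlast z (by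
        rw [List.getLast?_cons_cons]; exact hz))
      refine ⟨y :: run, w, r, by rw [List.cons_append, ← heq], by simp, ?_, hw⟩
      intro u hu
      rcases List.mem_cons.mp hu with rfl | hu
      exacts [hyC, hrun u hu]
    · refine ⟨[y], y₂, t₂, rfl, by simp, ?_, hy₂⟩
      intro u hu
      rcases List.mem_cons.mp hu with rfl | hu
      · exact hyC
      · simp at hu

lemma decomp {i j : V} :
    ∀ p : List V, p.head? = some i → i ∉ C → p.getLast? = some j → j ∉ C →
      ∀ b ∈ p, b ∈ C →
      ∃ (l : List V) (a : V) (run : List V) (w : V) (r : List V),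
        p = l ++ a :: (run ++ w :: r) ∧ run ≠ [] ∧ (∀ u ∈ run, u ∈ C) ∧ a ∉ C ∧ w ∉ C := by
  intro p
  induction p generalizing i with
  | nil => intro h; simp at h
  | cons x t ih =>
    intro hhead hiC hlast hjC b hb hbC
    have hxi : x = i := by simpa using hhead
    subst hxi
    have hbt : b ∈ t := by
      rcases hb with _ | hb
      · exact absurd hbC hiC
      · assumption
    cases t with
    | nil => simp at hbt
    | cons y t₂ =>
      have hlast' : (y :: t₂).getLast? = some j := by
        rw [List.getLast?_cons_cons] at hlast; exact hlast
      by_cases hy : y ∈ C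
      · obtain ⟨run, w, r, heq, hne, hrun, hw⟩ := split_run hy t₂
          (fun z hz => by rw [hlast'] at hz; rw [← Option.some_inj.mp hz.symm] at hjC; exact hjC)
        exact ⟨[], x, run, w, r, by rw [List.nil_append, heq], hne, hrun, hiC, hw⟩
      · obtain ⟨l, a, run, w, r, heq, hne, hrun, haC, hwC⟩ :=
          ih (i := y) rfl hy hlast' hjC b hbt hbC
        exact ⟨x :: l, a, run, w, r, by rw [heq, List.cons_append], hne, hrun, haC, hwC⟩

end MixedGraph
namespace MixedGraph

variable {V : Type*} {H : MixedGraph V}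

/-- Key structural lemma: in a maximal ancestral graph without unshielded
colliders, the endpoints of any path consisting entirely of arcs are adjacent. -/
lemma arcChain_adj (hanc : H.isAncestral) (hmax : H.isMaximal)
    (hnuc : ¬ ∃ i j k, H.unshieldedCollider i j k) :
    ∀ k, 1 ≤ k → ∀ x : ℕ → V,
      (∀ s t, s ≤ k → t ≤ k → x s = x t → s = t) →
      (∀ t, t + 1 ≤ k → H.arc (x t) (x (t+1))) →
      H.adj (x 0) (x k) := by
  intro k
  induction k using Nat.strong_induction_on with
  | _ k ih =>
  intro hk x hinj harc
  rcases eq_or_lt_of_le hk with h1 | h2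
  · subst h1
    exact Or.inr (Or.inr (Or.inr (harc 0 le_rfl)))
  · have shield : ∀ u v z, H.collider u v z → u ≠ z → H.adj u z := by
      intro u v z hc hne
      by_contra hna
      exact hnuc ⟨u, v, z, hc, hne, hna⟩
    have subadj : ∀ s t, s < t → t ≤ k → t - s < k → H.adj (x s) (x t) := by
      intro s t hst htk hlt
      have h := ih (t - s) hlt (by omega) (fun n => x (s + n))
        (fun a b ha hb he => by
          have := hinj (s + a) (s + b) (by omega) (by omega) he; omega)
        (fun n hn => by
          have h2 := harc (s + n) (by omega)
          rw [show s + n + 1 = s + (n + 1) by omega] at h2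
          exact h2)
      rw [show s + 0 = s from rfl, show s + (t - s) = t by omega] at h
      exact h
    by_contra hnadj
    have hne0k : x 0 ≠ x k := fun he => by
      have := hinj 0 k (by omega) (by omega) he; omega
    have tails : ∀ t, 1 ≤ t → t ≤ k - 1 →
        H.arrow (x t) (x 0) ∨ H.arrow (x t) (x k) := by
      intro t ht1 htk
      have hadj0 : H.adj (x 0) (x t) := subadj 0 t (by omega) (by omega) (by omega)
      have hadjk : H.adj (x t) (x k) := subadj t k (by omega) (by omega) (by omega)
      have harct : H.arc (x (t-1)) (x t) := by
        have h := harc (t-1) (by omega)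
        rw [show t - 1 + 1 = t by omega] at h
        exact h
      by_cases hh1 : H.headAt (x 0) (x t)
      · by_cases hh2 : H.headAt (x k) (x t)
        · exact absurd (shield _ _ _ ⟨hh1, hh2⟩ hne0k) hnadj
        · right
          rcases hadjk with h | h | h | h
          · exact absurd (Or.inr harct) (hanc.2 _ _ _ h)
          · exact h
          · exact absurd (Or.inl h) hh2
          · exact absurd (Or.inr (H.arc_symm _ _ h)) hh2
      · left
        rcases hadj0 with h | h | h | h
        · exact absurd (Or.inr harct) (hanc.2 _ _ _ (H.line_symm _ _ h))
        · exact absurd (Or.inl h) hh1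
        · exact h
        · exact absurd (Or.inr h) hh1
    have notcol : ∀ t, 1 ≤ t → t ≤ k - 1 → ¬ H.collider (x 0) (x t) (x k) := by
      rintro t ht1 htk ⟨hc1, hc2⟩
      rcases tails t ht1 htk with h | h
      · exact arrow_no_head hanc h hc1
      · exact arrow_no_head hanc h hc2
    obtain ⟨Cs, h0C, hkC, hsep⟩ := hmax (x 0) (x k) hne0k hnadj
    apply hsep
    by_cases hall : ∀ t, 1 ≤ t → t ≤ k - 1 → x t ∈ Cs
    · -- use the whole arc chain, every inner node is a collider in Cs
      set q : List V := (List.range (k+1)).map x with hqdef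
      have hqlen : q.length = k + 1 := by simp [hqdef]
      have hq : ∀ n, n ≤ k → q[n]? = some (x n) := by
        intro n hn
        rw [hqdef, List.getElem?_map]
        rw [List.getElem?_range (by omega)]
        rfl
      refine ⟨x 0, x k, q, rfl, rfl, ⟨?_, ?_⟩, by omega, ?_, ?_, ?_⟩
      · -- Nodup
        refine List.Nodup.map_on ?_ List.nodup_range
        intro s hs t ht he
        exact hinj s t (by simpa using Nat.lt_succ_iff.mp (List.mem_range.mp hs))
          (by simpa using Nat.lt_succ_iff.mp (List.mem_range.mp ht)) he
      · -- Chain'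
        rw [List.Chain', List.isChain_iff_getElem]
        intro n hn
        have e1 : q.get ⟨n, by omega⟩ = x n := by
          have h := hq n (by omega)
          rw [List.getElem?_eq_getElem (by omega)] at h
          simpa [List.get_eq_getElem] using h
        have e2 : q.get ⟨n+1, by omega⟩ = x (n+1) := by
          have h := hq (n+1) (by omega)
          rw [List.getElem?_eq_getElem (by omega)] at h
          simpa [List.get_eq_getElem] using h
        simp only [List.get_eq_getElem] at e1 e2
        rw [e1, e2]
        exact Or.inr (Or.inr (Or.inr (harc n (by omega))))
      · -- head?
        rw [List.head?_eq_getElem?]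
        exact hq 0 (by omega)
      · -- getLast?
        rw [List.getLast?_eq_getElem?, hqlen]
        simpa using hq k (by omega)
      · -- innerOK
        rw [innerOK_iff_triples]
        intro n a b c h1 h2 h3
        have hb : n + 2 < q.length := (List.getElem?_eq_some_iff.mp h3).1
        have ha : a = x n := by
          have := (hq n (by omega)).symm.trans h1; exact (Option.some_inj.mp this).symm
        have hbb : b = x (n+1) := by
          have := (hq (n+1) (by omega)).symm.trans h2; exact (Option.some_inj.mp this).symm
        have hc : c = x (n+2) := by
          have := (hq (n+2) (by omega)).symm.trans h3; exact (Option.some_inj.mp this).symm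
        subst ha; subst hbb; subst hc
        have hcol : H.collider (x n) (x (n+1)) (x (n+2)) :=
          ⟨Or.inr (harc n (by omega)),
           Or.inr (H.arc_symm _ _ (harc (n+1) (by omega)))⟩
        exact ⟨fun _ => Or.inl (hall (n+1) (by omega) (by omega)), fun hnc => absurd hcol hnc⟩
    · -- some inner node outside Cs : use it as a non-collider
      push_neg at hall
      obtain ⟨t, ht1, htk, htC⟩ := hall
      have hne1 : x 0 ≠ x t := fun he => by
        have := hinj 0 t (by omega) (by omega) he; omega
      have hne2 : x t ≠ x k := fun he => by
        have := hinj t k (by omega) (by omega) he; omega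
      refine ⟨x 0, x k, [x 0, x t, x k], rfl, rfl, ⟨?_, ?_⟩, by simp, rfl, by simp, ?_⟩
      · simp [hne1, hne2, hne0k]
      · refine List.isChain_cons_cons.mpr ⟨subadj 0 t (by omega) (by omega) (by omega), ?_⟩
        refine List.isChain_cons_cons.mpr ⟨subadj t k (by omega) (by omega) (by omega), ?_⟩
        simp
      · show (_ ∧ _) ∧ H.innerOK Cs [x t, x k]
        refine ⟨⟨fun hc => absurd hc (notcol t ht1 htk), fun _ => htC⟩, ?_⟩
        show True
        trivial

end MixedGraph
namespace MixedGraph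

variable {V : Type*} {G H : MixedGraph V} {C : Set V}

lemma mConnecting.nodup {i j : V} {p : List V} (h : G.mConnecting C i j p) : p.Nodup := h.1.1

lemma mConnecting.chain {i j : V} {p : List V} (h : G.mConnecting C i j p) :
    List.Chain' G.adj p := h.1.2

lemma ne_of_getElem? {p : List V} (hnd : p.Nodup) {n m : ℕ} {y z : V}
    (h1 : p[n]? = some y) (h2 : p[m]? = some z) (hnm : n ≠ m) : y ≠ z := by
  rintro rfl
  obtain ⟨hn, e1⟩ := List.getElem?_eq_some_iff.mp h1
  obtain ⟨hm, e2⟩ := List.getElem?_eq_some_iff.mp h2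
  exact hnm ((List.Nodup.getElem_inj_iff hnd).mp (e1.trans e2.symm))

lemma adj_of_chain' {R : V → V → Prop} {l : List V} (h : List.Chain' R l) {n : ℕ} {y z : V}
    (h1 : l[n]? = some y) (h2 : l[n+1]? = some z) : R y z := by
  obtain ⟨hn, e1⟩ := List.getElem?_eq_some_iff.mp h1
  obtain ⟨hm, e2⟩ := List.getElem?_eq_some_iff.mp h2
  subst e1; subst e2
  exact List.isChain_iff_getElem.mp h n (by omega)

lemma collider_of_innerC {i j : V} {p : List V} (hconn : G.mConnecting C i j p)
    {n : ℕ} {y b z : V} (h1 : p[n]? = some y) (h2 : p[n+1]? = some b)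
    (h3 : p[n+2]? = some z) (hb : b ∈ C) : G.collider y b z := by
  have tk := hconn.innerOK' n y b z h1 h2 h3
  by_contra hnc
  exact tk.2 hnc hb

lemma getElem?_mid (l : List V) (a : V) (s : List V) :
    (l ++ a :: s)[l.length]? = some a := by
  rw [List.getElem?_append_right le_rfl]; simp

lemma getElem?_tail (l : List V) (a : V) (s : List V) (t : ℕ) :
    (l ++ a :: s)[l.length + 1 + t]? = s[t]? := by
  rw [List.getElem?_append_right (by omega)]
  rw [show l.length + 1 + t - l.length = t + 1 by omega]
  simp

lemma getElem?_pre {l : List V} {s : List V} {n : ℕ} (h : n < l.length) :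
    (l ++ s)[n]? = l[n]? := List.getElem?_append_left h

/-- Surgery when the left end edge of the run is an arrow: remove the first run node. -/
lemma surgLeft (hanc : H.isAncestral) (hnuc : ¬ ∃ i j k, H.unshieldedCollider i j k)
    {i j a w u₁ : V} {l run' r : List V}
    (hconn : H.mConnecting C i j (l ++ a :: ((u₁ :: run') ++ w :: r)))
    (hrunC : ∀ u ∈ u₁ :: run', u ∈ C) (haC : a ∉ C) (hwC : w ∉ C)
    (hnarc : ¬ H.arc a u₁) :
    ∃ p', H.mConnecting C i j p' ∧
      p'.length + 1 = (l ++ a :: ((u₁ :: run') ++ w :: r)).length := by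
  set L := l.length with hL
  set p := l ++ a :: ((u₁ :: run') ++ w :: r) with hp
  have hpa : p[L]? = some a := getElem?_mid l a _
  have hpt : ∀ t, p[L+1+t]? = ((u₁ :: run') ++ w :: r)[t]? := getElem?_tail l a _ 
  have hp1 : p[L+1]? = some u₁ := by simpa using hpt 0
  have hu₁C : u₁ ∈ C := hrunC u₁ (by simp)
  cases run' with
  | nil =>
    have hp2 : p[L+2]? = some w := by
      have h := hpt 1
      rw [show L+1+1 = L+2 by omega] at h
      simpa using h
    have hp3 : p[L+3]? = r[0]? := by
      have h := hpt 2
      rw [show L+1+2 = L+3 by omega] at h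
      simpa using h
    have hcol1 : H.collider a u₁ w := collider_of_innerC hconn hpa hp1 hp2 hu₁C
    have harr : H.arrow a u₁ := hcol1.1.resolve_right hnarc
    have hanw : a ≠ w := ne_of_getElem? hconn.nodup hpa hp2 (by omega)
    have hadjaw : H.adj a w := by
      by_contra hna
      exact hnuc ⟨a, u₁, w, hcol1, hanw, hna⟩
    refine ⟨l ++ a :: w :: r, splice (m := [u₁]) hconn hadjaw ?_ ?_, by simp [hp]; omega⟩
    · intro z _
      exact ⟨fun _ => Or.inr ⟨u₁, hu₁C, anc_single harr⟩, fun _ => haC⟩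
    · intro y hy
      rw [List.head?_eq_getElem?] at hy
      have hy' : p[L+3]? = some y := by rw [hp3]; exact hy
      refine ⟨?_, fun _ => hwC⟩
      intro hcawy
      have tk := hconn.innerOK' (L+1) u₁ w y hp1
        (by rw [show L+1+1 = L+2 by omega]; exact hp2)
        (by rw [show L+1+2 = L+3 by omega]; exact hy')
      by_cases hc2 : H.collider u₁ w y
      · exact tk.1 hc2
      · have hnh : ¬ H.headAt u₁ w := fun hh => hc2 ⟨hh, hcawy.2⟩
        have hadj : H.adj u₁ w := adj_of_chain' hconn.chain hp1
          (by rw [show L+1+1 = L+2 by omega]; exact hp2)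
        rcases hadj with h | h | h | h
        · exact absurd hcol1.1 (hanc.2 _ _ _ h)
        · exact absurd (Or.inl h) hnh
        · exact Or.inr ⟨u₁, hu₁C, anc_single h⟩
        · exact absurd (Or.inr h) hnh
  | cons u₂ run'' =>
    have hp2 : p[L+2]? = some u₂ := by
      have h := hpt 1
      rw [show L+1+1 = L+2 by omega] at h
      simpa using h
    obtain ⟨y₀, hy₀⟩ : ∃ y₀, (run'' ++ w :: r)[0]? = some y₀ := by
      cases run'' <;> simp
    have hp3 : p[L+3]? = some y₀ := by
      have h := hpt 2
      rw [show L+1+2 = L+3 by omega] at h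
      rw [h]
      simpa using hy₀
    have hu₂C : u₂ ∈ C := hrunC u₂ (by simp)
    have hcol1 : H.collider a u₁ u₂ := collider_of_innerC hconn hpa hp1 hp2 hu₁C
    have hcol2 : H.collider u₁ u₂ y₀ := collider_of_innerC hconn hp1
      (by rw [show L+1+1 = L+2 by omega]; exact hp2)
      (by rw [show L+1+2 = L+3 by omega]; exact hp3) hu₂C
    have harr : H.arrow a u₁ := hcol1.1.resolve_right hnarc
    have harc12 : H.arc u₁ u₂ := two_heads_arc hanc hcol2.1 hcol1.2
    have hneau₂ : a ≠ u₂ := ne_of_getElem? hconn.nodup hpa hp2 (by omega)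
    have hadjau₂ : H.adj a u₂ := by
      by_contra hna
      exact hnuc ⟨a, u₁, u₂, hcol1, hneau₂, hna⟩
    have hhead2 : H.headAt a u₂ := by
      rcases hadjau₂ with h | h | h | h
      · exact absurd hcol2.1 (hanc.2 _ _ _ (H.line_symm _ _ h))
      · exact Or.inl h
      · exact absurd (Relation.ReflTransGen.head h (anc_single harr))
          (hanc.1 _ _ (Or.inr harc12))
      · exact Or.inr h
    refine ⟨l ++ a :: u₂ :: (run'' ++ w :: r),
      splice (m := [u₁]) hconn hadjau₂ ?_ ?_, by simp [hp]; omega⟩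
    · intro z _
      exact ⟨fun _ => Or.inr ⟨u₁, hu₁C, anc_single harr⟩, fun _ => haC⟩
    · intro y hy
      rw [List.head?_eq_getElem?, hy₀] at hy
      have hyy : y = y₀ := (Option.some_inj.mp hy).symm
      subst hyy
      exact ⟨fun _ => Or.inl hu₂C, fun hnc => absurd ⟨hhead2, hcol2.2⟩ hnc⟩

end MixedGraph
namespace MixedGraph

variable {V : Type*} {H : MixedGraph V} {C : Set V}

/-- Surgery: any m-connecting path containing a node of `C`, with endpoints
outside `C`, can be strictly shortened. -/
lemma surg (hanc : H.isAncestral) (hmax : H.isMaximal)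
    (hnuc : ¬ ∃ i j k, H.unshieldedCollider i j k)
    {i j : V} {p : List V} (hconn : H.mConnecting C i j p)
    (hiC : i ∉ C) (hjC : j ∉ C) (hex : ∃ b ∈ p, b ∈ C) :
    ∃ p', H.mConnecting C i j p' ∧ p'.length < p.length := by
  obtain ⟨b, hb, hbC⟩ := hex
  obtain ⟨l, a, run, w, r, heq, hrunne, hrunC, haC, hwC⟩ :=
    decomp p hconn.2.2.1 hiC hconn.2.2.2.1 hjC b hb hbC
  subst heq
  rcases run with _ | ⟨u₁, run'⟩
  · exact absurd rfl hrunne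
  clear hrunne hb hbC
  by_cases harc1 : H.arc a u₁
  swap
  · obtain ⟨p', hp', hlen⟩ := surgLeft hanc hnuc hconn hrunC haC hwC harc1
    exact ⟨p', hp', by omega⟩
  · set rn := u₁ :: run' with hrn
    set L := l.length with hLdef
    set K := rn.length with hKdef
    have hK1 : 1 ≤ K := by rw [hKdef, hrn]; simp
    set p := l ++ a :: (rn ++ w :: r) with hp
    rcases hKrev : rn.reverse with _ | ⟨uK, rrest⟩
    · exfalso
      have : rn = [] := by simpa using congrArg List.reverse hKrev
      rw [hrn] at this; simp at this
    have hlastK : rn[K-1]? = some uK := by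
      have h1 : rn.getLast? = some uK := by
        rw [← List.head?_reverse, hKrev]; rfl
      rw [List.getLast?_eq_getElem?] at h1
      exact h1
    by_cases harc2 : H.arc w uK
    swap
    · -- reverse and apply surgLeft
      have hprev : p.reverse = r.reverse ++ w :: ((uK :: rrest) ++ a :: l.reverse) := by
        rw [hp, ← hKrev]
        simp [List.reverse_append]
      have hconnrev : H.mConnecting C j i
          (r.reverse ++ w :: ((uK :: rrest) ++ a :: l.reverse)) := by
        rw [← hprev]; exact hconn.reverse
      have hrunCrev : ∀ u ∈ uK :: rrest, u ∈ C := by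
        intro u hu
        rw [← hKrev] at hu
        exact hrunC u (by simpa using hu)
      obtain ⟨q, hq, hqlen⟩ := surgLeft hanc hnuc hconnrev hrunCrev hwC haC harc2
      refine ⟨q.reverse, hq.reverse, ?_⟩
      have h1 : (r.reverse ++ w :: ((uK :: rrest) ++ a :: l.reverse)).length = p.length := by
        rw [← hprev]; simp
      rw [h1] at hqlen
      simp only [List.length_reverse]
      omega
    · -- both end edges are arcs : remove the whole run
      set q0 : List V := a :: (rn ++ [w]) with hq0
      have hq0len : q0.length = K + 2 := by rw [hq0]; simp [hKdef]
      have hq0sub : q0.Sublist p := by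
        have h1 : (rn ++ [w]).Sublist (rn ++ w :: r) :=
          ((List.nil_sublist r).cons₂ w).append_left rn
        exact (h1.cons₂ a).trans (List.sublist_append_right l _)
      have hq0nd : q0.Nodup := hconn.nodup.sublist hq0sub
      set x : ℕ → V := fun t => q0.getD t a with hx
      have hq0get : ∀ t, t ≤ K + 1 → q0[t]? = some (x t) := by
        intro t ht
        have hlt : t < q0.length := by omega
        rw [List.getElem?_eq_getElem hlt, hx]
        simp [List.getD_eq_getElem?_getD, List.getElem?_eq_getElem hlt]
      have hinj : ∀ s t, s ≤ K+1 → t ≤ K+1 → x s = x t → s = t := by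
        intro s t hs ht he
        by_contra hne
        exact (ne_of_getElem? hq0nd (hq0get s hs) (hq0get t ht) hne) he
      have hx0 : x 0 = a := by
        have := hq0get 0 (by omega)
        rw [hq0] at this
        simpa using this.symm
      have hxw : x (K+1) = w := by
        have h1 := hq0get (K+1) (by omega)
        rw [hq0] at h1
        have h2 : (a :: (rn ++ [w]))[K+1]? = some w := by
          rw [show ((a :: (rn ++ [w])) : List V)[K+1]? = (rn ++ [w])[K]? by simp,
            List.getElem?_append_right (by omega)]
          simp [hKdef]
        rw [h2] at h1
        exact (Option.some_inj.mp h1).symm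
      have hxrn : ∀ t, t < K → rn[t]? = some (x (t+1)) := by
        intro t ht
        have h1 := hq0get (t+1) (by omega)
        rw [hq0, show ((a :: (rn ++ [w])) : List V)[t+1]? = (rn ++ [w])[t]? by simp,
          List.getElem?_append_left (by omega)] at h1
        exact h1
      have hx1 : x 1 = u₁ := by
        have := hxrn 0 (by omega)
        rw [hrn] at this
        simpa using this.symm
      have hxK : x K = uK := by
        have h1 := hxrn (K-1) (by omega)
        rw [show K - 1 + 1 = K by omega] at h1
        rw [hlastK] at h1
        exact (Option.some_inj.mp h1).symm
      -- positions of the x's inside p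
      have hpa : p[L]? = some a := getElem?_mid l a _
      have hpt : ∀ t, p[L+1+t]? = (rn ++ w :: r)[t]? := getElem?_tail l a _
      have hpx : ∀ t, t ≤ K + 1 → p[L+t]? = some (x t) := by
        intro t ht
        rcases Nat.eq_zero_or_pos t with rfl | htpos
        · rw [hx0]; simpa using hpa
        · have h1 := hpt (t-1)
          rw [show L + 1 + (t-1) = L + t by omega] at h1
          rcases lt_or_eq_of_le ht with hlt | heq
          · rw [h1, List.getElem?_append_left (by omega)]
            have := hxrn (t-1) (by omega)
            rw [show t - 1 + 1 = t by omega] at this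
            exact this
          · subst heq
            rw [show K + 1 - 1 = K by omega] at h1
            rw [hxw, h1, List.getElem?_append_right (by omega)]
            rw [show K - K = 0 by omega]
            simp
      have hxC : ∀ t, 1 ≤ t → t ≤ K → x t ∈ C := by
        intro t ht1 htK
        have h1 := hxrn (t-1) (by omega)
        rw [show t - 1 + 1 = t by omega] at h1
        exact hrunC _ (List.mem_of_getElem? h1)
      have hcolx : ∀ t, 1 ≤ t → t ≤ K →
          H.collider (x (t-1)) (x t) (x (t+1)) := by
        intro t ht1 htK
        have h1 : p[L + (t-1)]? = some (x (t-1)) := hpx (t-1) (by omega)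
        have h2 : p[L + (t-1) + 1]? = some (x t) := by
          rw [show L + (t-1) + 1 = L + t by omega]; exact hpx t (by omega)
        have h3 : p[L + (t-1) + 2]? = some (x (t+1)) := by
          rw [show L + (t-1) + 2 = L + (t+1) by omega]; exact hpx (t+1) (by omega)
        exact collider_of_innerC hconn h1 h2 h3 (hxC t ht1 htK)
      have harcx : ∀ t, t + 1 ≤ K + 1 → H.arc (x t) (x (t+1)) := by
        intro t ht
        rcases Nat.eq_zero_or_pos t with rfl | htpos
        · rw [hx0, hx1]; exact harc1
        · rcases lt_or_eq_of_le ht with hlt | heq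
          · have hA := (hcolx (t+1) (by omega) (by omega)).1
            rw [show t + 1 - 1 = t by omega] at hA
            have hB := (hcolx t (by omega) (by omega)).2
            exact two_heads_arc hanc hA hB
          · have : t = K := by omega
            subst this
            rw [hxw, hxK]
            exact H.arc_symm _ _ harc2
      have hadjaw : H.adj a w := by
        have h := arcChain_adj hanc hmax hnuc (K+1) (by omega) x hinj harcx
        rw [hx0, hxw] at h
        exact h
      refine ⟨l ++ a :: w :: r, splice (m := rn) hconn hadjaw ?_ ?_, by
        rw [hp]; simp [hrn]⟩
      · intro z hz
        refine ⟨?_, fun _ => haC⟩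
        intro hcaw
        have hlne : l ≠ [] := by rintro rfl; simp at hz
        have hL1 : 1 ≤ L := by
          have := List.length_pos_iff.mpr hlne
          omega
        have hz' : p[L-1]? = some z := by
          rw [hp, getElem?_pre (by omega)]
          rw [List.getLast?_eq_getElem?] at hz
          rw [show L - 1 = l.length - 1 by omega]
          exact hz
        have tk := hconn.innerOK' (L-1) z a (x 1)
          hz'
          (by rw [show L-1+1 = L by omega]; exact hpa)
          (by rw [show L-1+2 = L+1 by omega]; exact hpx 1 (by omega))
        refine tk.1 ⟨hcaw.1, ?_⟩
        rw [hx1]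
        exact Or.inr (H.arc_symm _ _ harc1)
      · intro y hy
        refine ⟨?_, fun _ => hwC⟩
        intro hcawy
        have hy' : p[L+K+2]? = some y := by
          have h1 := hpt (K+1)
          rw [show L + 1 + (K+1) = L + K + 2 by omega] at h1
          rw [h1, List.getElem?_append_right (by omega),
            show K + 1 - K = 1 by omega]
          rw [List.head?_eq_getElem?] at hy
          simpa using hy
        have tk := hconn.innerOK' (L+K) (x K) w y
          (hpx K (by omega))
          (by rw [show L+K+1 = L+(K+1) by omega]
              have := hpx (K+1) (by omega)
              rw [hxw] at this
              exact this)
          hy'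
        refine tk.1 ⟨?_, hcawy.2⟩
        rw [hxK]
        exact Or.inr (H.arc_symm _ _ harc2)

end MixedGraph
namespace MixedGraph

variable {V : Type*} {H : MixedGraph V} {C : Set V}

lemma H_to_skel (hanc : H.isAncestral) (hmax : H.isMaximal)
    (hnuc : ¬ ∃ i j k, H.unshieldedCollider i j k) :
    ∀ (n : ℕ) (p : List V) (i j : V), p.length ≤ n → H.mConnecting C i j p →
      i ∉ C → j ∉ C → ∃ q, (skel H).mConnecting C i j q := by
  intro n
  induction n with
  | zero =>
    intro p i j hlen hconn _ _
    have := hconn.2.1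
    omega
  | succ n ih =>
    intro p i j hlen hconn hiC hjC
    by_cases hex : ∃ b ∈ p, b ∈ C
    · obtain ⟨p', hp', hlt⟩ := surg hanc hmax hnuc hconn hiC hjC hex
      exact ih p' i j (by omega) hp' hiC hjC
    · push_neg at hex
      refine ⟨p, ⟨hconn.nodup, ?_⟩, hconn.2.1, hconn.2.2.1, hconn.2.2.2.1, ?_⟩
      · exact hconn.chain.imp (fun a b hab => skel_adj.mpr hab)
      · rw [innerOK_iff_triples]
        intro m u v z _ h2 _
        exact ⟨fun hc => absurd hc (isUG_no_collider (skel_isUG H)),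
          fun _ => hex v (List.mem_of_getElem? h2)⟩

lemma skel_to_H (hanc : H.isAncestral)
    (hnuc : ¬ ∃ i j k, H.unshieldedCollider i j k) :
    ∀ (n : ℕ) (p : List V) (i j : V), p.length ≤ n →
      (skel H).mConnecting C i j p → ∃ q, H.mConnecting C i j q := by
  intro n
  induction n with
  | zero =>
    intro p i j hlen hconn
    have := hconn.2.1
    omega
  | succ n ih =>
    intro p i j hlen hconn
    by_cases hchord : ∃ (m : ℕ) (u v z : V), p[m]? = some u ∧ p[m+1]? = some v ∧
        p[m+2]? = some z ∧ H.adj u z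
    · obtain ⟨m, u, v, z, h1, h2, h3, hadj⟩ := hchord
      obtain ⟨hm2, e2⟩ := List.getElem?_eq_some_iff.mp h3
      obtain ⟨hm1, e1⟩ := List.getElem?_eq_some_iff.mp h2
      obtain ⟨hm0, e0⟩ := List.getElem?_eq_some_iff.mp h1
      have e : p = p.take m ++ u :: ([v] ++ z :: p.drop (m+3)) := by
        have d0 : p.drop m = u :: p.drop (m+1) := by
          rw [List.drop_eq_getElem_cons hm0, e0]
        have d1 : p.drop (m+1) = v :: p.drop (m+2) := by
          rw [List.drop_eq_getElem_cons hm1, e1]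
        have d2 : p.drop (m+2) = z :: p.drop (m+3) := by
          rw [List.drop_eq_getElem_cons hm2, e2]
        conv_lhs => rw [← List.take_append_drop m p]
        rw [d0, d1, d2]
        simp
      have hconn' : (skel H).mConnecting C i j
          (p.take m ++ u :: ([v] ++ z :: p.drop (m+3))) := by rw [← e]; exact hconn
      have htakelen : (p.take m).length = m := by simp; omega
      have hq' := splice (G := skel H) hconn' (skel_adj.mpr hadj) ?_ ?_
      · refine ih _ i j ?_ hq'
        have hplen := congrArg List.length e
        simp only [List.length_append, List.length_cons, List.length_append,
          List.length_cons] at hplen ⊢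
        simp at hplen ⊢
        omega
      · -- Ha : last of take m , u , z
        intro z' hz'
        refine ⟨fun hc => absurd hc (isUG_no_collider (skel_isUG H)), fun _ => ?_⟩
        -- u ∉ C : u is the centre of the p-triple at m-1
        have hmne : p.take m ≠ [] := by
          rintro hnil
          rw [hnil] at hz'
          simp at hz'
        have hm1' : 1 ≤ m := by
          rcases Nat.eq_zero_or_pos m with rfl | h
          · simp at hmne
          · omega
        have hz'' : p[m-1]? = some z' := by
          rw [List.getLast?_eq_getElem?, htakelen] at hz'
          rw [← hz']
          rw [List.getElem?_take]
          simp [show m - 1 < m by omega]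
        have tk := hconn.innerOK' (m-1) z' u v hz''
          (by rw [show m-1+1 = m by omega]; exact h1)
          (by rw [show m-1+2 = m+1 by omega]; exact h2)
        exact tk.2 (isUG_no_collider (skel_isUG H))
      · -- Hw : u, z, head of drop (m+3)
        intro y hy
        refine ⟨fun hc => absurd hc (isUG_no_collider (skel_isUG H)), fun _ => ?_⟩
        have hy' : p[m+3]? = some y := by
          rw [List.head?_eq_getElem?, List.getElem?_drop] at hy
          simpa using hy
        have tk := hconn.innerOK' (m+1) v z y h2
          (by rw [show m+1+1 = m+2 by omega]; exact h3)
          (by rw [show m+1+2 = m+3 by omega]; exact hy')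
        exact tk.2 (isUG_no_collider (skel_isUG H))
    · push_neg at hchord
      refine ⟨p, ⟨hconn.nodup, ?_⟩, hconn.2.1, hconn.2.2.1, hconn.2.2.2.1, ?_⟩
      · exact hconn.chain.imp (fun a b hab => skel_adj.mp hab)
      · rw [innerOK_iff_triples]
        intro m u v z h1 h2 h3
        have hnadj : ¬ H.adj u z := hchord m u v z h1 h2 h3
        have hne : u ≠ z := ne_of_getElem? hconn.nodup h1 h3 (by omega)
        have hncol : ¬ H.collider u v z := fun hc => hnuc ⟨u, v, z, hc, hne, hnadj⟩
        have tk := hconn.innerOK' m u v z h1 h2 h3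
        exact ⟨fun hc => absurd hc hncol,
          fun _ => tk.2 (isUG_no_collider (skel_isUG H))⟩

end MixedGraph

/-- A maximal ancestral graph is Markov equivalent to some undirected graph
iff it contains no unshielded collider V-configuration. -/
theorem mag_equiv_some_ug_iff {V : Type*} [Fintype V] (H : MixedGraph V)
    (hH : H.isMAG) :
    (∃ U : MixedGraph V, U.isUG ∧ H.markovEquiv U) ↔
      ¬ ∃ i j k, H.unshieldedCollider i j k := by
  obtain ⟨hanc, hmax⟩ := hH
  constructor
  · rintro ⟨U, hUG, hequiv⟩ ⟨i, j, k, ⟨⟨h1, h2⟩, hik, hnadj⟩⟩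
    have hij : i ≠ j := MixedGraph.headAt.ne h1
    have hkj : k ≠ j := MixedGraph.headAt.ne h2
    obtain ⟨C₀, hiC₀, hkC₀, hsep₀⟩ := hmax i k hik hnadj
    have hd1 : Disjoint ({i} : Set V) {k} := by simp [hik]
    have hd2 : Disjoint ({i} : Set V) C₀ := Set.disjoint_singleton_left.mpr hiC₀
    have hd3 : Disjoint ({k} : Set V) C₀ := Set.disjoint_singleton_left.mpr hkC₀
    have hU0 : U.mSep {i} {k} C₀ := (hequiv _ _ _ hd1 hd2 hd3).mp hsep₀
    set C₁ : Set V := insert j C₀ with hC₁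
    have hiC₁ : i ∉ C₁ := by
      intro hmem
      rcases hmem with rfl | hmem
      · exact hij rfl
      · exact hiC₀ hmem
    have hkC₁ : k ∉ C₁ := by
      intro hmem
      rcases hmem with rfl | hmem
      · exact hkj rfl
      · exact hkC₀ hmem
    have hd2' : Disjoint ({i} : Set V) C₁ := Set.disjoint_singleton_left.mpr hiC₁
    have hd3' : Disjoint ({k} : Set V) C₁ := Set.disjoint_singleton_left.mpr hkC₁
    have hU1 : U.mSep {i} {k} C₁ := by
      rintro ⟨i', k', p, hi', hk', hconn⟩
      apply hU0
      refine ⟨i', k', p, hi', hk', hconn.1, hconn.2.1, hconn.2.2.1, hconn.2.2.2.1, ?_⟩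
      rw [MixedGraph.innerOK_iff_triples]
      intro n u v z h1' h2' h3'
      have tk := hconn.innerOK' n u v z h1' h2' h3'
      refine ⟨fun hc => absurd hc (MixedGraph.isUG_no_collider hUG), fun _ => ?_⟩
      intro hvC₀
      exact tk.2 (MixedGraph.isUG_no_collider hUG) (Set.mem_insert_of_mem j hvC₀)
    have hH1 : H.mSep {i} {k} C₁ := (hequiv _ _ _ hd1 hd2' hd3').mpr hU1
    apply hH1
    refine ⟨i, k, [i, j, k], rfl, rfl, ⟨?_, ?_⟩, by simp, rfl, by simp, ?_⟩
    · have hjk : j ≠ k := fun h => hkj h.symm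
      simp [hij, hik, hjk]
    · refine List.isChain_cons_cons.mpr ⟨h1.adj, ?_⟩
      refine List.isChain_cons_cons.mpr ⟨h2.adj', ?_⟩
      simp
    · show (_ ∧ _) ∧ H.innerOK C₁ [j, k]
      exact ⟨⟨fun _ => Or.inl (Set.mem_insert j C₀), fun hnc => absurd ⟨h1, h2⟩ hnc⟩,
        trivial⟩
  · intro hnuc
    refine ⟨MixedGraph.skel H, MixedGraph.skel_isUG H, ?_⟩
    intro A B C dAB dAC dBC
    constructor
    · intro hs
      rintro ⟨i, j, p, hiA, hjB, hconn⟩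
      obtain ⟨q, hq⟩ := MixedGraph.skel_to_H hanc hnuc p.length p i j le_rfl hconn
      exact hs ⟨i, j, q, hiA, hjB, hq⟩
    · intro hs
      rintro ⟨i, j, p, hiA, hjB, hconn⟩
      have hiC : i ∉ C := Set.disjoint_left.mp dAC hiA
      have hjC : j ∉ C := Set.disjoint_left.mp dBC hjB
      obtain ⟨q, hq⟩ :=
        MixedGraph.H_to_skel hanc hmax hnuc p.length p i j le_rfl hconn hiC hjC
      exact hs ⟨i, j, q, hiA, hjB, hq⟩
end
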